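/- arXiv:2006.15934 — 6 statements merged into one kernel-verified Lean document; each statement's English description precedes it below -/
import Mathlib

section
/- Fix N ∈ ℕ and real numbers r, R with 0 < r < R. Let z_1,…,z_N, w_1,…,w_N ∈ ℂ be such that |z_i| = R and |w_i| ≤ r for i = 1,…,N. Then |det [1/(z_i − w_j)]_{i,j=1}^N| ≤ R^{−N} · N^N · (r/R)^{N(N−1)/2} / (1 − r/R)^{N²}. -/
open Finset Matrix Polynomial
open scoped ComplexOrder

private lemma amgm {n : ℕ} (hn : 0 < n) (lam : Fin n → ℝ) (h0 : ∀ i, 0 ≤ lam i)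
    (hsum : ∑ i, lam i ≤ n) : ∏ i, lam i ≤ 1 := by
  have hn' : (0:ℝ) < n := by exact_mod_cast hn
  have h1 : ∏ i : Fin n, (lam i) ^ ((n:ℝ)⁻¹) ≤ ∑ i : Fin n, (n:ℝ)⁻¹ * lam i :=
    Real.geom_mean_le_arith_mean_weighted univ _ _ (fun i _ => by positivity)
      (by simp [Finset.sum_const, Finset.card_univ]; field_simp) (fun i _ => h0 i)
  have h2 : (∏ i, lam i) ^ ((n:ℝ)⁻¹) ≤ 1 := by
    rw [← Real.finset_prod_rpow _ _ (fun i _ => h0 i)]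
    refine h1.trans ?_
    rw [← Finset.mul_sum]
    calc (n:ℝ)⁻¹ * ∑ i, lam i ≤ (n:ℝ)⁻¹ * n :=
          mul_le_mul_of_nonneg_left hsum (by positivity)
      _ = 1 := by field_simp
  have hprod : (0:ℝ) ≤ ∏ i, lam i := Finset.prod_nonneg fun i _ => h0 i
  calc ∏ i, lam i = ((∏ i, lam i) ^ ((n:ℝ)⁻¹)) ^ (n:ℕ) := by
        rw [← Real.rpow_natCast ((∏ i, lam i) ^ ((n:ℝ)⁻¹)) n, ← Real.rpow_mul hprod,
          inv_mul_cancel₀ (ne_of_gt hn'), Real.rpow_one]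
    _ ≤ 1 := pow_le_one₀ (Real.rpow_nonneg hprod _) h2

private lemma det_sq_le_one {n : ℕ} (hn : 0 < n) (M : Matrix (Fin n) (Fin n) ℂ)
    (h : ∀ j, ∑ i, Complex.normSq (M i j) ≤ 1) : Complex.normSq M.det ≤ 1 := by
  have hG : (Mᴴ * M).PosSemidef := posSemidef_conjTranspose_mul_self M
  have hherm := hG.1
  set lam := hherm.eigenvalues with hlam
  have h1 : (Mᴴ * M).det = ((Complex.normSq M.det : ℝ) : ℂ) := by
    rw [Matrix.det_mul, Matrix.det_conjTranspose, Complex.star_def, mul_comm, Complex.mul_conj]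
  have hdet : Complex.normSq M.det = ∏ i, lam i := by
    have h2 := h1.symm.trans hherm.det_eq_prod_eigenvalues
    rw [hlam]
    rw [← RCLike.ofReal_prod] at h2
    exact RCLike.ofReal_inj.mp h2.symm |>.symm
  have htrace : (Mᴴ * M).trace = ∑ i, (lam i : ℂ) := by
    conv_lhs => rw [hherm.spectral_theorem]
    rw [Unitary.conjStarAlgAut_apply, trace_mul_cycle,
      (Matrix.mem_unitaryGroup_iff').mp (hherm.eigenvectorUnitary).2, one_mul,
      trace_diagonal]
    simp [hlam]
  have htrace2 : (Mᴴ * M).trace = ((∑ j, ∑ i, Complex.normSq (M i j) : ℝ) : ℂ) := by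
    rw [Matrix.trace]
    push_cast
    refine Finset.sum_congr rfl fun j _ => ?_
    rw [Matrix.diag_apply, Matrix.mul_apply]
    push_cast
    refine Finset.sum_congr rfl fun i _ => ?_
    rw [Matrix.conjTranspose_apply, mul_comm, Complex.star_def, Complex.mul_conj]
  have hsumlam : ∑ i, lam i = ∑ j, ∑ i, Complex.normSq (M i j) := by
    have := htrace.symm.trans htrace2
    exact_mod_cast this
  rw [hdet]
  refine amgm hn lam (fun i => hG.eigenvalues_nonneg i) ?_
  rw [hsumlam]
  calc ∑ j, ∑ i, Complex.normSq (M i j) ≤ ∑ _j : Fin n, (1:ℝ) :=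
        Finset.sum_le_sum fun j _ => h j
    _ = n := by simp

private lemma hadamard_sq {n : ℕ} (M : Matrix (Fin n) (Fin n) ℂ) (b : Fin n → ℝ)
    (hb : ∀ j, ∑ i, Complex.normSq (M i j) ≤ b j) :
    Complex.normSq M.det ≤ ∏ j, b j := by
  rcases Nat.eq_zero_or_pos n with h0 | hn
  · subst h0
    simp [Matrix.det_fin_zero]
  have hbn : ∀ j, 0 ≤ b j := fun j =>
    le_trans (Finset.sum_nonneg fun i _ => Complex.normSq_nonneg _) (hb j)
  by_cases hz : ∃ j, b j = 0
  · obtain ⟨j, hj⟩ := hz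
    have hcol : ∀ i, M i j = 0 := by
      intro i
      have h1 : ∑ i, Complex.normSq (M i j) ≤ 0 := hj ▸ hb j
      have h2 : Complex.normSq (M i j) = 0 := by
        have := Finset.sum_nonneg (s := univ) fun i (_ : i ∈ univ) => Complex.normSq_nonneg (M i j)
        have hle : Complex.normSq (M i j) ≤ ∑ i, Complex.normSq (M i j) :=
          Finset.single_le_sum (fun i _ => Complex.normSq_nonneg (M i j)) (mem_univ i)
        nlinarith [Complex.normSq_nonneg (M i j)]
      exact Complex.normSq_eq_zero.mp h2
    rw [Matrix.det_eq_zero_of_column_eq_zero j hcol]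
    simpa using Finset.prod_nonneg fun j _ => hbn j
  push_neg at hz
  have hbpos : ∀ j, 0 < b j := fun j => lt_of_le_of_ne (hbn j) (Ne.symm (hz j))
  set M' := M * diagonal (fun j => ((Real.sqrt (b j))⁻¹ : ℂ)) with hM'
  have hM'app : ∀ i j, M' i j = M i j * ((Real.sqrt (b j))⁻¹ : ℂ) := by
    intro i j; rw [hM', Matrix.mul_diagonal]
  have key : Complex.normSq M'.det ≤ 1 := by
    refine det_sq_le_one hn M' fun j => ?_
    have hsq : ∀ i, Complex.normSq (M' i j) = Complex.normSq (M i j) * (b j)⁻¹ := by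
      intro i
      rw [hM'app, _root_.map_mul Complex.normSq, map_inv₀, Complex.normSq_ofReal,
        Real.mul_self_sqrt (le_of_lt (hbpos j))]
    calc ∑ i, Complex.normSq (M' i j) = (∑ i, Complex.normSq (M i j)) * (b j)⁻¹ := by
          rw [Finset.sum_mul]; exact Finset.sum_congr rfl fun i _ => hsq i
      _ ≤ b j * (b j)⁻¹ := by
          exact mul_le_mul_of_nonneg_right (hb j) (inv_nonneg.mpr (hbn j))
      _ = 1 := mul_inv_cancel₀ (ne_of_gt (hbpos j))
  have hdet' : Complex.normSq M'.det = Complex.normSq M.det * (∏ j, b j)⁻¹ := by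
    rw [hM', Matrix.det_mul, Matrix.det_diagonal, _root_.map_mul Complex.normSq]
    congr 1
    rw [map_prod Complex.normSq, ← Finset.prod_inv_distrib]
    refine Finset.prod_congr rfl fun j _ => ?_
    rw [map_inv₀, Complex.normSq_ofReal, Real.mul_self_sqrt (le_of_lt (hbpos j))]
  rw [hdet'] at key
  have hprodpos : 0 < ∏ j, b j := Finset.prod_pos fun j _ => hbpos j
  calc Complex.normSq M.det = Complex.normSq M.det * (∏ j, b j)⁻¹ * (∏ j, b j) := by
        field_simp
    _ ≤ 1 * (∏ j, b j) := mul_le_mul_of_nonneg_right key (le_of_lt hprodpos)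
    _ = ∏ j, b j := one_mul _

-- swap double product over strict lower/upper triangles
private lemma prod_swap_tri {N : ℕ} (f : Fin N → Fin N → ℝ) :
    ∏ j, ∏ k ∈ Finset.Iio j, f j k = ∏ j, ∏ k ∈ Finset.Ioi j, f k j := by
  rw [Finset.prod_sigma', Finset.prod_sigma']
  exact Finset.prod_nbij' (fun p => ⟨p.2, p.1⟩) (fun p => ⟨p.2, p.1⟩)
    (fun p hp => by
      simp only [Finset.mem_sigma, Finset.mem_univ, Finset.mem_Iio, Finset.mem_Ioi, true_and] at *
      exact hp)
    (fun p hp => by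
      simp only [Finset.mem_sigma, Finset.mem_univ, Finset.mem_Iio, Finset.mem_Ioi, true_and] at *
      exact hp)
    (fun p _ => rfl) (fun p _ => rfl) (fun p _ => rfl)

private lemma erase_eq_Iio_union_Ioi {N : ℕ} (j : Fin N) :
    Finset.univ.erase j = Finset.Iio j ∪ Finset.Ioi j := by
  ext k
  simp only [Finset.mem_erase, Finset.mem_univ, and_true, Finset.mem_union, Finset.mem_Iio,
    Finset.mem_Ioi]
  constructor
  · exact fun h => Ne.lt_or_gt h
  · rintro (h | h) <;> exact (by omega)

private lemma cauchy_abs {N : ℕ} (hN : 0 < N) (z w : Fin N → ℂ) (hzw : ∀ i j, z i - w j ≠ 0)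
    (hwinj : Function.Injective w) :
    ‖Matrix.det (Matrix.of fun i j => (z i - w j)⁻¹)‖ *
      ∏ i, ∏ j, ‖z i - w j‖ =
    ‖Matrix.det (Matrix.vandermonde z)‖ *
      ‖Matrix.det (Matrix.vandermonde w)‖ := by
  set C : Matrix (Fin N) (Fin N) ℂ := Matrix.of fun i j => (z i - w j)⁻¹ with hC
  set p : Fin N → ℂ[X] := fun j => ∏ k ∈ Finset.univ.erase j, (X - Polynomial.C (w k)) with hp
  have hdeg : ∀ j, (p j).natDegree < N := by
    intro j
    have h1 : (p j).natDegree = ∑ k ∈ Finset.univ.erase j, (X - Polynomial.C (w k)).natDegree :=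
      natDegree_prod_of_monic _ _ (fun k _ => monic_X_sub_C _)
    rw [h1]
    simp only [natDegree_X_sub_C]
    rw [Finset.sum_const, smul_eq_mul, mul_one, Finset.card_erase_of_mem (Finset.mem_univ j),
      Finset.card_univ, Fintype.card_fin]
    omega
  set A : Matrix (Fin N) (Fin N) ℂ := Matrix.of fun k j => (p j).coeff k with hA
  have hVA : ∀ (x : Fin N → ℂ),
      Matrix.vandermonde x * A = Matrix.of fun i j => (p j).eval (x i) := by
    intro x
    ext i j
    rw [Matrix.mul_apply, Matrix.of_apply]
    rw [eval_eq_sum_range' (hdeg j)]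
    rw [← Fin.sum_univ_eq_sum_range (fun k => (p j).coeff k * (x i) ^ k)]
    exact Finset.sum_congr rfl fun k _ => by
      rw [Matrix.vandermonde_apply, hA, Matrix.of_apply, mul_comm]
  have hevalz : ∀ i j, (p j).eval (z i) = (∏ k, (z i - w k)) * (z i - w j)⁻¹ := by
    intro i j
    rw [hp]
    simp only [eval_prod, eval_sub, eval_X, eval_C]
    rw [← Finset.mul_prod_erase Finset.univ _ (Finset.mem_univ j)]
    rw [mul_comm (z i - w j), mul_assoc, mul_inv_cancel₀ (hzw i j), mul_one]
  have hfact : Matrix.diagonal (fun i => ∏ k, (z i - w k)) * C = Matrix.vandermonde z * A := by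
    rw [hVA]
    ext i j
    rw [Matrix.diagonal_mul, Matrix.of_apply, hevalz, hC, Matrix.of_apply]
  have hWA : Matrix.vandermonde w * A
      = Matrix.diagonal (fun j => ∏ k ∈ Finset.univ.erase j, (w j - w k)) := by
    rw [hVA]
    ext i j
    rcases eq_or_ne i j with h | h
    · subst h
      rw [Matrix.of_apply, Matrix.diagonal_apply_eq, hp]
      simp only [eval_prod, eval_sub, eval_X, eval_C]
    · rw [Matrix.of_apply, Matrix.diagonal_apply_ne _ h, hp]
      simp only [eval_prod, eval_sub, eval_X, eval_C]
      exact Finset.prod_eq_zero (Finset.mem_erase.mpr ⟨h, Finset.mem_univ i⟩) (sub_self _)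
  have hdet1 : (∏ i, ∏ k, (z i - w k)) * C.det = (Matrix.vandermonde z).det * A.det := by
    have h := congrArg Matrix.det hfact
    rwa [Matrix.det_mul, Matrix.det_mul, Matrix.det_diagonal] at h
  have hdet2 : (Matrix.vandermonde w).det * A.det
      = ∏ j, ∏ k ∈ Finset.univ.erase j, (w j - w k) := by
    have h := congrArg Matrix.det hWA
    rwa [Matrix.det_mul, Matrix.det_diagonal] at h
  -- absolute values
  have hVw : ‖Matrix.det (Matrix.vandermonde w)‖
      = ∏ i, ∏ j ∈ Finset.Ioi i, ‖w j - w i‖ := by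
    rw [Matrix.det_vandermonde, norm_prod]
    exact Finset.prod_congr rfl fun i _ => norm_prod _ _
  have hD : ∏ j, ∏ k ∈ Finset.univ.erase j, ‖w j - w k‖
      = (‖Matrix.det (Matrix.vandermonde w)‖) ^ 2 := by
    have hsplit : ∀ j : Fin N, ∏ k ∈ Finset.univ.erase j, ‖w j - w k‖
        = (∏ k ∈ Finset.Iio j, ‖w j - w k‖) *
          (∏ k ∈ Finset.Ioi j, ‖w j - w k‖) := by
      intro j
      rw [erase_eq_Iio_union_Ioi, Finset.prod_union]
      exact Finset.disjoint_left.mpr (fun k hk hk' => by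
        simp only [Finset.mem_Iio, Finset.mem_Ioi] at *
        exact absurd hk' (not_lt.mpr hk.le))
    calc ∏ j, ∏ k ∈ Finset.univ.erase j, ‖w j - w k‖
        = (∏ j, ∏ k ∈ Finset.Iio j, ‖w j - w k‖) *
          (∏ j, ∏ k ∈ Finset.Ioi j, ‖w j - w k‖) := by
          rw [← Finset.prod_mul_distrib]
          exact Finset.prod_congr rfl fun j _ => hsplit j
      _ = (∏ j, ∏ k ∈ Finset.Ioi j, ‖w k - w j‖) *
          (∏ j, ∏ k ∈ Finset.Ioi j, ‖w k - w j‖) := by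
          rw [prod_swap_tri (fun j k => ‖w j - w k‖)]
          congr 1
          exact Finset.prod_congr rfl fun j _ => Finset.prod_congr rfl fun k _ =>
            (norm_sub_rev _ _)
      _ = (‖Matrix.det (Matrix.vandermonde w)‖) ^ 2 := by
          rw [hVw, sq]
  have hVwne : ‖Matrix.det (Matrix.vandermonde w)‖ ≠ 0 := by
    simpa using (Matrix.det_vandermonde_ne_zero_iff.mpr hwinj)
  -- take abs of hdet1 and hdet2
  have habs1 : (∏ i, ∏ k, ‖z i - w k‖) * ‖C.det‖
      = ‖Matrix.det (Matrix.vandermonde z)‖ * ‖A.det‖ := by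
    have h := congrArg (‖·‖) hdet1
    rwa [norm_mul, norm_mul, norm_prod,
      Finset.prod_congr rfl (fun i (_ : i ∈ Finset.univ) => norm_prod
        Finset.univ (fun k => z i - w k))] at h
  have habs2 : ‖Matrix.det (Matrix.vandermonde w)‖ * ‖A.det‖
      = (‖Matrix.det (Matrix.vandermonde w)‖) ^ 2 := by
    have h := congrArg (‖·‖) hdet2
    rw [norm_mul, norm_prod] at h
    rw [h, ← hD]
    exact Finset.prod_congr rfl fun j _ => norm_prod _ _
  have hAabs : ‖A.det‖ = ‖Matrix.det (Matrix.vandermonde w)‖ :=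
    mul_left_cancel₀ hVwne (habs2.trans (pow_two _))
  rw [mul_comm] at habs1
  rw [habs1, hAabs]

theorem stmt0 (N : ℕ) (r R : ℝ) (hr : 0 < r) (hrR : r < R)
    (z w : Fin N → ℂ)
    (hz : ∀ i, ‖z i‖ = R) (hw : ∀ i, ‖w i‖ ≤ r) :
    ‖Matrix.det (Matrix.of fun i j => (z i - w j)⁻¹)‖ ≤
      R ^ (-(N : ℤ)) * (N : ℝ) ^ N * (r / R) ^ (N * (N - 1) / 2) / (1 - r / R) ^ (N ^ 2) := by
  have hR : 0 < R := hr.trans hrR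
  have hxlt : r / R < 1 := (div_lt_one hR).mpr hrR
  have hxpos : 0 < r / R := div_pos hr hR
  have h1x : 0 < 1 - r / R := by linarith
  set e := N * (N - 1) / 2 with he
  have hRHS : (0:ℝ) ≤ R ^ (-(N : ℤ)) * (N : ℝ) ^ N * (r / R) ^ e / (1 - r / R) ^ (N ^ 2) := by
    positivity
  rcases Nat.eq_zero_or_pos N with hN0 | hN
  · subst hN0
    simp only [Matrix.det_fin_zero, norm_one]
    norm_num [he]
  -- degenerate cases
  by_cases hzi : Function.Injective z
  swap
  · simp only [Function.Injective] at hzi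
    push_neg at hzi
    obtain ⟨i, j, hij, hne⟩ := hzi
    have hdet0 : Matrix.det (Matrix.of fun i j => (z i - w j)⁻¹) = 0 := by
      apply Matrix.det_zero_of_row_eq hne
      funext k
      simp [hij]
    rw [hdet0, norm_zero]
    exact hRHS
  by_cases hwi : Function.Injective w
  swap
  · simp only [Function.Injective] at hwi
    push_neg at hwi
    obtain ⟨i, j, hij, hne⟩ := hwi
    have hdet0 : Matrix.det (Matrix.of fun i j => (z i - w j)⁻¹) = 0 := by
      rw [← Matrix.det_transpose]
      apply Matrix.det_zero_of_row_eq hne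
      funext k
      simp [Matrix.transpose_apply, hij]
    rw [hdet0, norm_zero]
    exact hRHS
  -- main case
  have hzw : ∀ i j, z i - w j ≠ 0 := by
    intro i j h
    rw [sub_eq_zero] at h
    have : R ≤ r := by rw [← hz i, h]; exact hw j
    linarith
  have key := cauchy_abs hN z w hzw hwi
  -- Gauss sum
  have hsum : ∑ j : Fin N, (j : ℕ) = e := by
    rw [Fin.sum_univ_eq_sum_range (fun k => k), Finset.sum_range_id, he]
  have h2e : 2 * e = N * (N - 1) := by
    rw [he, Nat.mul_div_cancel']
    exact even_iff_two_dvd.mp (Nat.even_mul_pred_self N)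
  have hN2 : N ^ 2 = e + e + N := by
    have : N * (N - 1) + N = N ^ 2 := by
      cases N with
      | zero => simp
      | succ n => simp [Nat.succ_sub_one]; ring
    omega
  -- Hadamard bounds
  have hVz : (‖Matrix.det (Matrix.vandermonde z)‖) ^ 2
      ≤ (N : ℝ) ^ N * (R ^ e) ^ 2 := by
    have hH := hadamard_sq (Matrix.vandermonde z) (fun j => (N : ℝ) * (R ^ 2) ^ (j : ℕ))
      (fun j => by
        have : ∀ i : Fin N, Complex.normSq (Matrix.vandermonde z i j)
            = (R ^ 2) ^ (j : ℕ) := by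
          intro i
          rw [Matrix.vandermonde_apply, ← Complex.sq_norm, norm_pow, hz i, ← pow_mul, ← pow_mul,
            mul_comm]
        rw [Finset.sum_congr rfl fun i _ => this i, Finset.sum_const, Finset.card_univ,
          Fintype.card_fin, nsmul_eq_mul])
    rw [Complex.sq_norm]
    calc Complex.normSq (Matrix.det (Matrix.vandermonde z))
        ≤ ∏ j : Fin N, (N : ℝ) * (R ^ 2) ^ (j : ℕ) := hH
      _ = (N : ℝ) ^ N * (R ^ e) ^ 2 := by
          rw [Finset.prod_mul_distrib, Finset.prod_const, Finset.card_univ, Fintype.card_fin,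
            Finset.prod_pow_eq_pow_sum, hsum, ← pow_mul, ← pow_mul, mul_comm e 2, mul_comm 2 e]
  have hVw : (‖Matrix.det (Matrix.vandermonde w)‖) ^ 2
      ≤ (N : ℝ) ^ N * (r ^ e) ^ 2 := by
    have hH := hadamard_sq (Matrix.vandermonde w) (fun j => (N : ℝ) * (r ^ 2) ^ (j : ℕ))
      (fun j => by
        have hterm : ∀ i : Fin N, Complex.normSq (Matrix.vandermonde w i j)
            ≤ (r ^ 2) ^ (j : ℕ) := by
          intro i
          rw [Matrix.vandermonde_apply, ← Complex.sq_norm, norm_pow, ← pow_mul, ← pow_mul,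
            mul_comm ((j:ℕ)) 2, pow_mul, pow_mul]
          exact pow_le_pow_left₀ (pow_nonneg (norm_nonneg _) 2)
            (pow_le_pow_left₀ (norm_nonneg _) (hw i) 2) _
        calc ∑ i, Complex.normSq (Matrix.vandermonde w i j)
            ≤ ∑ _i : Fin N, (r ^ 2) ^ (j : ℕ) := Finset.sum_le_sum fun i _ => hterm i
          _ = (N : ℝ) * (r ^ 2) ^ (j : ℕ) := by
              rw [Finset.sum_const, Finset.card_univ, Fintype.card_fin, nsmul_eq_mul])
    rw [Complex.sq_norm]
    calc Complex.normSq (Matrix.det (Matrix.vandermonde w))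
        ≤ ∏ j : Fin N, (N : ℝ) * (r ^ 2) ^ (j : ℕ) := hH
      _ = (N : ℝ) ^ N * (r ^ e) ^ 2 := by
          rw [Finset.prod_mul_distrib, Finset.prod_const, Finset.card_univ, Fintype.card_fin,
            Finset.prod_pow_eq_pow_sum, hsum, ← pow_mul, ← pow_mul, mul_comm e 2, mul_comm 2 e]
  -- product lower bound
  have hP : (R - r) ^ (N ^ 2) ≤ ∏ i, ∏ j, ‖z i - w j‖ := by
    have hlow : ∀ i j, R - r ≤ ‖z i - w j‖ := by
      intro i j
      have h1 : ‖z i‖ - ‖w j‖ ≤ ‖z i - w j‖ := by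
        simpa using norm_sub_norm_le (z i) (w j)
      have := hw j
      rw [hz i] at h1
      linarith
    calc (R - r) ^ (N ^ 2) = ∏ _i : Fin N, ∏ _j : Fin N, (R - r) := by
          rw [Finset.prod_const, Finset.prod_const, Finset.card_univ, Fintype.card_fin,
            ← pow_mul, ← pow_two]
      _ ≤ ∏ i, ∏ j, ‖z i - w j‖ := by
          refine Finset.prod_le_prod (fun i _ => Finset.prod_nonneg fun j _ => by linarith [hlow i j]) ?_
          intro i _
          refine Finset.prod_le_prod (fun j _ => by linarith) (fun j _ => hlow i j)
  set d := ‖Matrix.det (Matrix.of fun i j => (z i - w j)⁻¹)‖ with hd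
  have hd0 : 0 ≤ d := norm_nonneg _
  have hRr : (0:ℝ) < R - r := by linarith
  -- combine
  have hmain : d * (R - r) ^ (N ^ 2) ≤ (N : ℝ) ^ N * R ^ e * r ^ e := by
    have hsq : (d * (R - r) ^ (N ^ 2)) ^ 2 ≤ ((N : ℝ) ^ N * R ^ e * r ^ e) ^ 2 := by
      calc (d * (R - r) ^ (N ^ 2)) ^ 2
          ≤ (d * ∏ i, ∏ j, ‖z i - w j‖) ^ 2 := by
            apply pow_le_pow_left₀ (by positivity)
            exact mul_le_mul_of_nonneg_left hP hd0
        _ = (‖Matrix.det (Matrix.vandermonde z)‖) ^ 2 *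
            (‖Matrix.det (Matrix.vandermonde w)‖) ^ 2 := by
            rw [key]; ring
        _ ≤ ((N : ℝ) ^ N * (R ^ e) ^ 2) * ((N : ℝ) ^ N * (r ^ e) ^ 2) := by
            exact mul_le_mul hVz hVw (by positivity) (by positivity)
        _ = ((N : ℝ) ^ N * R ^ e * r ^ e) ^ 2 := by ring
    exact (pow_le_pow_iff_left₀ (by positivity) (by positivity) (two_ne_zero)).mp hsq
  -- final algebra
  have hfin : (N : ℝ) ^ N * R ^ e * r ^ e / (R - r) ^ (N ^ 2)
      = R ^ (-(N : ℤ)) * (N : ℝ) ^ N * (r / R) ^ e / (1 - r / R) ^ (N ^ 2) := by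
    rw [_root_.zpow_neg, zpow_natCast]
    have h1 : (1 - r / R) = (R - r) / R := by field_simp
    rw [h1, div_pow, div_pow, hN2]
    field_simp
    ring
  rw [← hfin]
  rw [le_div_iff₀ (by positivity)]
  exact hmain
end

section
/- Let t ∈ (0,1). There exists a constant C > 0, depending on t alone, such that for every real U with 0 < U ≤ (−log t)/4 and every z ∈ ℂ with Re(z) ∈ [U, (−log t)/2], one has Σ_{k∈ℤ} 1/|sin(−π·(z + 2πik)/(−log t))| ≤ C/U. -/
open Real in
lemma aux_abs_sin_ge_sinh (z : ℂ) :
    Real.sinh |z.im| ≤ ‖Complex.sin z‖ := by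
  have hre : (Complex.sin z).re = Real.sin z.re * Real.cosh z.im := by
    rw [Complex.sin_eq]
    simp [Complex.sin_ofReal_re, Complex.cos_ofReal_re, Complex.sinh_ofReal_re,
      Complex.cosh_ofReal_re, Complex.sin_ofReal_im, Complex.cos_ofReal_im,
      Complex.sinh_ofReal_im, Complex.cosh_ofReal_im]
  have him : (Complex.sin z).im = Real.cos z.re * Real.sinh z.im := by
    rw [Complex.sin_eq]
    simp [Complex.sin_ofReal_re, Complex.cos_ofReal_re, Complex.sinh_ofReal_re,
      Complex.cosh_ofReal_re, Complex.sin_ofReal_im, Complex.cos_ofReal_im,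
      Complex.sinh_ofReal_im, Complex.cosh_ofReal_im]
  have h1 : (Real.sinh |z.im|) ^ 2 ≤ (‖Complex.sin z‖) ^ 2 := by
    rw [Complex.sq_norm, Complex.normSq_apply, hre, him]
    have hc := Real.cosh_sq z.im
    have hs := Real.sin_sq_add_cos_sq z.re
    have habs : Real.sinh |z.im| ^ 2 = Real.sinh z.im ^ 2 := by
      rw [← Real.abs_sinh]; exact sq_abs _
    rw [habs]; nlinarith [sq_nonneg (Real.sin z.re), sq_nonneg (Real.sinh z.im),
      sq_nonneg (Real.cos z.re), sq_nonneg (Real.cosh z.im)]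
  have h2 : 0 ≤ ‖Complex.sin z‖ := norm_nonneg _
  nlinarith [Real.sinh_nonneg_iff.mpr (abs_nonneg z.im)]

lemma aux_abs_sin_ge_re (z : ℂ) :
    |Real.sin z.re| ≤ ‖Complex.sin z‖ := by
  have hre : (Complex.sin z).re = Real.sin z.re * Real.cosh z.im := by
    rw [Complex.sin_eq]
    simp [Complex.sin_ofReal_re, Complex.cos_ofReal_re, Complex.sinh_ofReal_re,
      Complex.cosh_ofReal_re, Complex.sin_ofReal_im, Complex.cos_ofReal_im,
      Complex.sinh_ofReal_im, Complex.cosh_ofReal_im]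
  have h1 : |(Complex.sin z).re| ≤ ‖Complex.sin z‖ :=
    Complex.abs_re_le_norm _
  have h2 : |Real.sin z.re| ≤ |(Complex.sin z).re| := by
    rw [hre, abs_mul, abs_of_pos (Real.cosh_pos (x := z.im))]
    nlinarith [abs_nonneg (Real.sin z.re), Real.one_le_cosh z.im]
  linarith

lemma aux_sinh_exp {c s : ℝ} (hc : 0 ≤ c) (hs : 0 ≤ s) :
    Real.sinh c * Real.exp s ≤ Real.sinh (c + s) := by
  rw [Real.sinh_add, ← Real.cosh_add_sinh]
  have h1 : 0 ≤ Real.sinh s := Real.sinh_nonneg_iff.mpr hs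
  have h2 : Real.sinh c ≤ Real.cosh c := by
    nlinarith [Real.cosh_sub_sinh c, Real.exp_pos (-c)]
  nlinarith

set_option maxHeartbeats 1000000 in
theorem stmt3 (t : ℝ) (ht : t ∈ Set.Ioo (0:ℝ) 1) :
    ∃ C > 0, ∀ U : ℝ, 0 < U → U ≤ (-Real.log t) / 4 →
      ∀ z : ℂ, z.re ∈ Set.Icc U ((-Real.log t) / 2) →
        Summable (fun k : ℤ =>
          (‖Complex.sin (-(Real.pi : ℂ) *
            (z + 2 * (Real.pi : ℂ) * Complex.I * (k : ℂ)) / (-(Real.log t : ℂ)))‖)⁻¹) ∧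
        (∑' k : ℤ,
          (‖Complex.sin (-(Real.pi : ℂ) *
            (z + 2 * (Real.pi : ℂ) * Complex.I * (k : ℂ)) / (-(Real.log t : ℂ)))‖)⁻¹) ≤ C / U := by
  obtain ⟨ht0, ht1⟩ := ht
  set L : ℝ := -Real.log t with hLdef
  have hL : 0 < L := by
    have := Real.log_neg ht0 ht1
    simp only [hLdef]; linarith
  have hπ : (0:ℝ) < Real.pi := Real.pi_pos
  set d : ℝ := 2 * Real.pi ^ 2 / L with hddef
  have hd : 0 < d := by positivity
  set r : ℝ := Real.exp (-(d/2)) with hrdef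
  have hr0 : 0 < r := Real.exp_pos _
  have hr1 : r < 1 := by
    rw [hrdef]; apply Real.exp_lt_one_iff.mpr; linarith
  set S : ℤ → ℝ := fun j => r ^ j.natAbs with hSdef
  have hSnn : ∀ j, 0 ≤ S j := fun j => pow_nonneg hr0.le _
  have hS : Summable S := by
    apply Summable.of_nat_of_neg
    · simpa [hSdef] using summable_geometric_of_lt_one hr0.le hr1
    · simpa [hSdef] using summable_geometric_of_lt_one hr0.le hr1
  set T : ℝ := ∑' j, S j with hTdef
  have hT0 : 0 ≤ T := tsum_nonneg hSnn
  set B : ℝ := Real.exp d / Real.sinh (d/2) with hBdef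
  have hB : 0 < B := by
    apply div_pos (Real.exp_pos _)
    exact Real.sinh_pos_iff.mpr (by linarith)
  refine ⟨L/2 + B*T*(L/4), by positivity, ?_⟩
  intro U hU hU4 z hz
  obtain ⟨hz1, hz2⟩ := hz
  -- the argument of sin
  set w : ℤ → ℂ := fun k => -(Real.pi : ℂ) *
      (z + 2 * (Real.pi : ℂ) * Complex.I * (k : ℂ)) / (-(Real.log t : ℂ)) with hwdef
  have hweq : ∀ k : ℤ, w k = -(((Real.pi/L : ℝ) : ℂ) * z + ((d * k : ℝ) : ℂ) * Complex.I) := by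
    intro k
    have hLne : (L : ℂ) ≠ 0 := by exact_mod_cast hL.ne'
    have hlog : -(Real.log t : ℂ) = (L : ℂ) := by
      rw [hLdef]; push_cast; ring
    rw [hwdef]
    simp only
    rw [hlog, hddef]
    push_cast
    field_simp
  have hre : ∀ k : ℤ, (w k).re = -((Real.pi/L) * z.re) := by
    intro k
    rw [hweq k]
    simp only [Complex.neg_re, Complex.add_re, Complex.mul_re, Complex.ofReal_re,
      Complex.ofReal_im, Complex.I_re, Complex.I_im]
    ring
  have him : ∀ k : ℤ, (w k).im = -((Real.pi/L) * z.im + d * k) := by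
    intro k
    rw [hweq k]
    simp only [Complex.neg_im, Complex.add_im, Complex.mul_im, Complex.ofReal_re,
      Complex.ofReal_im, Complex.I_re, Complex.I_im]
    ring
  set x : ℝ := (Real.pi/L) * z.re with hxdef
  have hx0 : 0 < x := by
    apply mul_pos (by positivity); linarith
  have hx2 : x ≤ Real.pi / 2 := by
    rw [hxdef]
    rw [div_mul_eq_mul_div, div_le_div_iff₀ hL (by norm_num : (0:ℝ) < 2)]
    nlinarith
  have hsinx : 2 * U / L ≤ Real.sin x := by
    have h1 := Real.mul_le_sin hx0.le hx2
    have h2 : 2 * U / L ≤ 2 / Real.pi * x := by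
      have he : 2 / Real.pi * x = 2 * z.re / L := by
        rw [hxdef]; field_simp
      rw [he]; gcongr
    linarith
  have hsinxpos : 0 < Real.sin x := lt_of_lt_of_le (by positivity) hsinx
  set f : ℤ → ℝ := fun k =>
      (‖Complex.sin (w k)‖)⁻¹ with hfdef
  have hfnn : ∀ k, 0 ≤ f k := fun k => inv_nonneg.mpr (norm_nonneg _)
  -- bound 1 : every term
  have hbound1 : ∀ k : ℤ, f k ≤ L / (2 * U) := by
    intro k
    have h1 : Real.sin x ≤ ‖Complex.sin (w k)‖ := by
      have := aux_abs_sin_ge_re (w k)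
      rw [hre k, Real.sin_neg, abs_neg] at this
      calc Real.sin x ≤ |Real.sin x| := le_abs_self _
        _ ≤ _ := this
    have h2 : 2 * U / L ≤ ‖Complex.sin (w k)‖ := le_trans hsinx h1
    have h3 : (0:ℝ) < 2 * U / L := by positivity
    calc f k ≤ (2 * U / L)⁻¹ := by
          apply inv_anti₀ h3 h2
      _ = L / (2 * U) := by rw [inv_div]
    
  -- bound 2 : away from the nearest integer
  set a : ℝ := (Real.pi/L) * z.im with hadef
  set k0 : ℤ := round (-(a / d)) with hk0def
  have hbound2 : ∀ k : ℤ, k ≠ k0 → f k ≤ B * S (k - k0) := by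
    intro k hk
    set m : ℕ := (k - k0).natAbs with hmdef
    have hm1 : 1 ≤ m := by
      rwa [hmdef, Nat.one_le_iff_ne_zero, Int.natAbs_ne_zero, sub_ne_zero]
    have hyk : d / 2 + d * (m - 1) ≤ |(w k).im| := by
      rw [him k, abs_neg]
      have h1 : |(-(a/d)) - (k0:ℝ)| ≤ 1/2 := abs_sub_round _
      have h2 : a + d * k = d * ((k - k0 : ℤ) : ℝ) - d * ((-(a/d)) - k0) := by
        push_cast; field_simp; ring
      have h3 : (m : ℝ) ≤ |((k - k0 : ℤ) : ℝ)| := by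
        rw [hmdef, Nat.cast_natAbs, Int.cast_abs]
      have h4 : d * (m:ℝ) - d * (1/2) ≤ |a + d * k| := by
        rw [h2]
        have := abs_sub_abs_le_abs_sub (d * ((k - k0 : ℤ) : ℝ)) (d * ((-(a/d)) - k0))
        have h5 : |d * ((k - k0 : ℤ) : ℝ)| = d * |((k - k0 : ℤ) : ℝ)| := by
          rw [abs_mul, abs_of_pos hd]
        have h6 : |d * ((-(a/d)) - k0)| ≤ d * (1/2) := by
          rw [abs_mul, abs_of_pos hd]
          exact mul_le_mul_of_nonneg_left h1 hd.le
        have h7 := mul_le_mul_of_nonneg_left h3 hd.le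
        linarith
      linarith
    have hsinh : Real.sinh (d/2) * Real.exp (d * (m - 1)) ≤
        ‖Complex.sin (w k)‖ := by
      have h1 := aux_abs_sin_ge_sinh (w k)
      have h2 : Real.sinh (d/2 + d * (m-1)) ≤ Real.sinh |(w k).im| :=
        Real.sinh_le_sinh.mpr hyk
      have hm1' : (1:ℝ) ≤ m := by exact_mod_cast hm1
      have h3 := aux_sinh_exp (c := d/2) (s := d * (m - 1))
        (by linarith) (by nlinarith)
      linarith
    have hpos : 0 < Real.sinh (d/2) * Real.exp (d * (m - 1)) := by
      have := Real.sinh_pos_iff.mpr (show (0:ℝ) < d/2 by linarith)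
      positivity
    have h4 : f k ≤ (Real.sinh (d/2) * Real.exp (d * (m - 1)))⁻¹ :=
      inv_anti₀ hpos hsinh
    have hm1' : (1:ℝ) ≤ m := by exact_mod_cast hm1
    have hsd : 0 < Real.sinh (d/2) := Real.sinh_pos_iff.mpr (by linarith)
    have hrpow : S (k - k0) = Real.exp ((m:ℝ) * -(d/2)) := by
      rw [hSdef]
      simp only [← hmdef, hrdef]
      exact (Real.exp_nat_mul _ m).symm
    have h5 : (Real.sinh (d/2) * Real.exp (d * (m - 1)))⁻¹ ≤ B * S (k - k0) := by
      have heq : (Real.sinh (d/2) * Real.exp (d * (m - 1)))⁻¹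
          = Real.exp (-(d * (m - 1))) / Real.sinh (d/2) := by
        rw [mul_inv, Real.exp_neg]; ring
      have hrhs : Real.exp d / Real.sinh (d/2) * Real.exp ((m:ℝ) * -(d/2))
          = Real.exp (d + (m:ℝ) * -(d/2)) / Real.sinh (d/2) := by
        rw [div_mul_eq_mul_div, ← Real.exp_add]
      rw [heq, hBdef, hrpow, hrhs]
      refine (div_le_div_iff_of_pos_right hsd).mpr (Real.exp_le_exp.mpr ?_)
      nlinarith
    linarith
  -- finite sum bound
  have hLU : 1 ≤ L / (4 * U) := by
    rw [le_div_iff₀ (by positivity)]; linarith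
  have hfin : ∀ s : Finset ℤ, ∑ k ∈ s, f k ≤ (L/2 + B*T*(L/4)) / U := by
    intro s
    have hgeo : ∀ s' : Finset ℤ, ∑ k ∈ s', S (k - k0) ≤ T := by
      intro s'
      have hinj : Set.InjOn (· - k0) s' := fun p _ q _ h => by
        simpa using sub_left_injective h
      calc ∑ k ∈ s', S (k - k0) = ∑ j ∈ s'.image (· - k0), S j :=
            (Finset.sum_image (fun p hp q hq h => hinj hp hq h)).symm
        _ ≤ T := Summable.sum_le_tsum _ (fun j _ => hSnn j) hS
    have key : ∑ k ∈ s, f k ≤ L / (2*U) + B * T := by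
      by_cases hk0s : k0 ∈ s
      · rw [← Finset.add_sum_erase s f hk0s]
        have h1 : ∑ k ∈ s.erase k0, f k ≤ B * T := by
          calc ∑ k ∈ s.erase k0, f k ≤ ∑ k ∈ s.erase k0, B * S (k - k0) :=
                Finset.sum_le_sum (fun k hk =>
                  hbound2 k (Finset.ne_of_mem_erase hk))
            _ = B * ∑ k ∈ s.erase k0, S (k - k0) := by rw [Finset.mul_sum]
            _ ≤ B * T := mul_le_mul_of_nonneg_left (hgeo _) hB.le
        have := hbound1 k0
        linarith
      · have h1 : ∑ k ∈ s, f k ≤ B * T := by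
          calc ∑ k ∈ s, f k ≤ ∑ k ∈ s, B * S (k - k0) :=
                Finset.sum_le_sum (fun k hk =>
                  hbound2 k (fun h => hk0s (h ▸ hk)))
            _ = B * ∑ k ∈ s, S (k - k0) := by rw [Finset.mul_sum]
            _ ≤ B * T := mul_le_mul_of_nonneg_left (hgeo _) hB.le
        have h2 : (0:ℝ) ≤ L / (2*U) := by positivity
        linarith
    have h2 : L / (2*U) + B * T ≤ (L/2 + B*T*(L/4)) / U := by
      have e1 : (L/2 + B*T*(L/4)) / U = L/(2*U) + (B*T*(L/4))/U := by
        field_simp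
      have e2 : B * T ≤ (B*T*(L/4)) / U := by
        rw [le_div_iff₀ hU]
        nlinarith [mul_nonneg hB.le hT0]
      rw [e1]
      linarith
    linarith
  have hsum : Summable f := summable_of_sum_le hfnn hfin
  exact ⟨hsum, Summable.tsum_le_of_sum_le hsum hfin⟩
end

section
/- Let t ∈ (0,1). There exists a constant C > 0, depending on t alone, such that the following holds: for all u, U ∈ (0,1) with 0 < u < U < min(1, (−log t)/10) and all z, w ∈ ℂ with Re(w) ∈ [−U, 0] and Re(z) ∈ [u, U], one has (i) 1/|e^z − e^w| ≤ C·u^{−1}, and (ii) Σ_{k∈ℤ} 1/|sin(−π·[(w − z)/log t − 2πik/log t])| ≤ C·u^{−1}. -/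
open Real Complex

lemma sin_decomp (x y : ℝ) : Complex.sin ((x:ℂ) + (y:ℂ) * Complex.I) =
    ((Real.sin x * Real.cosh y : ℝ) : ℂ) + ((Real.cos x * Real.sinh y : ℝ) : ℂ) * Complex.I := by
  rw [Complex.sin_add, Complex.cos_mul_I, Complex.sin_mul_I]
  push_cast
  ring

lemma abs_sin_lb_re (x y : ℝ) : |Real.sin x| ≤ ‖Complex.sin ((x:ℂ) + (y:ℂ) * Complex.I)‖ := by
  rw [sin_decomp, Complex.norm_add_mul_I, ← Real.sqrt_sq_eq_abs]
  apply Real.sqrt_le_sqrt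
  have h1 : 1 ≤ Real.cosh y ^ 2 := by nlinarith [Real.one_le_cosh y]
  nlinarith [h1, sq_nonneg (Real.sin x), sq_nonneg (Real.cos x * Real.sinh y)]

lemma abs_sin_lb_im (x y : ℝ) : |Real.sinh y| ≤ ‖Complex.sin ((x:ℂ) + (y:ℂ) * Complex.I)‖ := by
  rw [sin_decomp, Complex.norm_add_mul_I, ← Real.sqrt_sq_eq_abs]
  apply Real.sqrt_le_sqrt
  nlinarith [Real.cosh_sq x, Real.cosh_sq y, Real.sin_sq_add_cos_sq x, sq_nonneg (Real.sinh y)]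

lemma geoZ {r : ℝ} (h0 : 0 ≤ r) (h1 : r < 1) : Summable (fun k : ℤ => r ^ k.natAbs) := by
  apply Summable.of_nat_of_neg <;> simpa using summable_geometric_of_lt_one h0 h1

lemma geoZsum {r : ℝ} (h0 : 0 ≤ r) (h1 : r < 1) : (∑' k : ℤ, r ^ k.natAbs) ≤ 2 / (1 - r) := by
  rw [Summable.tsum_of_nat_of_neg (by simpa using summable_geometric_of_lt_one h0 h1)
    (by simpa using summable_geometric_of_lt_one h0 h1)]
  have h2 : (∑' n : ℕ, r ^ ((n:ℤ)).natAbs) = (1-r)⁻¹ := by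
    simpa using tsum_geometric_of_lt_one h0 h1
  have h3 : (∑' n : ℕ, r ^ ((-(n:ℤ))).natAbs) = (1-r)⁻¹ := by
    simpa using tsum_geometric_of_lt_one h0 h1
  rw [h2, h3]
  have hr' : (0:ℝ) < 1 - r := by linarith
  rw [div_eq_mul_inv]
  have : (0:ℝ) < (1-r)⁻¹ := by positivity
  simp only [Int.natAbs_zero, pow_zero]
  linarith

set_option maxHeartbeats 1600000 in
theorem stmt4 (t : ℝ) (ht : t ∈ Set.Ioo (0:ℝ) 1) :
    ∃ C > 0, ∀ u U : ℝ, 0 < u → u < U → U < min 1 ((-Real.log t) / 10) →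
      ∀ z w : ℂ, w.re ∈ Set.Icc (-U) 0 → z.re ∈ Set.Icc u U →
        ‖Complex.exp z - Complex.exp w‖⁻¹ ≤ C * u⁻¹ ∧
        Summable (fun k : ℤ =>
          ‖Complex.sin (-(Real.pi : ℂ) * ((w - z) / (Real.log t : ℂ) -
            2 * (Real.pi : ℂ) * Complex.I * (k : ℂ) / (Real.log t : ℂ)))‖⁻¹) ∧
        (∑' k : ℤ,
          ‖Complex.sin (-(Real.pi : ℂ) * ((w - z) / (Real.log t : ℂ) -
            2 * (Real.pi : ℂ) * Complex.I * (k : ℂ) / (Real.log t : ℂ)))‖⁻¹) ≤ C * u⁻¹ := by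
  obtain ⟨ht0, ht1⟩ := ht
  have hL : Real.log t < 0 := Real.log_neg ht0 ht1
  have hLpos : 0 < -Real.log t := by linarith
  have hnL : -Real.log t ≠ 0 := ne_of_gt hLpos
  have hLne : Real.log t ≠ 0 := ne_of_lt hL
  have hLneC : (Real.log t : ℂ) ≠ 0 := Complex.ofReal_ne_zero.mpr hLne
  obtain ⟨P, hPdef⟩ : ∃ P : ℝ, P = Real.pi / (-Real.log t) := ⟨_, rfl⟩
  have hP : 0 < P := hPdef ▸ div_pos Real.pi_pos hLpos
  obtain ⟨r, hrdef⟩ : ∃ r : ℝ, r = Real.exp (-(Real.pi * P)) := ⟨_, rfl⟩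
  have hr0 : 0 < r := hrdef ▸ Real.exp_pos _
  have hr1 : r < 1 := hrdef ▸ Real.exp_lt_one_iff.mpr (neg_lt_zero.mpr (by positivity))
  have h1r : (0:ℝ) < 1 - r := by linarith
  have hr2 : (0:ℝ) < 1 - r^2 := by
    have : r^2 < 1 := pow_lt_one₀ hr0.le hr1 (by norm_num)
    linarith
  obtain ⟨K, hKdef⟩ : ∃ K : ℝ, K = 2 / (1 - r^2) := ⟨_, rfl⟩
  have hK : 0 < K := by rw [hKdef]; positivity
  have hK2 : K * (1 - r^2) = 2 := by rw [hKdef]; field_simp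
  have hB0 : 0 < K * (2/(1-r)) := mul_pos hK (by positivity)
  refine ⟨1 + (-Real.log t)/2 + K * (2/(1-r)), by linarith [hB0, hLpos], ?_⟩
  intro u U hu huU hUmin z w hw hz
  have hU1 : U < 1 := lt_of_lt_of_le hUmin (min_le_left _ _)
  have hUL : U < (-Real.log t)/10 := lt_of_lt_of_le hUmin (min_le_right _ _)
  have hu1 : u < 1 := huU.trans hU1
  obtain ⟨hw1, hw2⟩ := hw
  obtain ⟨hz1, hz2⟩ := hz
  have hui : (1:ℝ) ≤ u⁻¹ := by
    have := inv_anti₀ hu hu1.le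
    simpa using this
  have hu0 : (0:ℝ) < u⁻¹ := by positivity
  -- part (i)
  have part1 : ‖Complex.exp z - Complex.exp w‖⁻¹ ≤
      (1 + (-Real.log t)/2 + K * (2/(1-r))) * u⁻¹ := by
    have h3 : ‖Complex.exp z‖ - ‖Complex.exp w‖ ≤
        ‖Complex.exp z - Complex.exp w‖ := by
      simpa using norm_sub_norm_le (Complex.exp z) (Complex.exp w)
    have h4 : Real.exp w.re ≤ 1 := Real.exp_le_one_iff.mpr hw2
    have h5 : u + 1 ≤ Real.exp z.re :=
      le_trans (by linarith [Real.add_one_le_exp u]) (Real.exp_le_exp.mpr hz1)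
    have hexp : u ≤ ‖Complex.exp z - Complex.exp w‖ := by
      rw [Complex.norm_exp, Complex.norm_exp] at h3; linarith
    have h6 := inv_anti₀ hu hexp
    calc ‖Complex.exp z - Complex.exp w‖⁻¹ ≤ u⁻¹ := h6
      _ ≤ (1 + (-Real.log t)/2 + K * (2/(1-r))) * u⁻¹ := by
          have h7 : (1:ℝ)*u⁻¹ ≤ (1 + (-Real.log t)/2 + K * (2/(1-r)))*u⁻¹ :=
            mul_le_mul_of_nonneg_right (by linarith [hB0, hLpos]) hu0.le
          linarith
  -- setup for part (ii)
  obtain ⟨X, hXdef⟩ : ∃ X : ℝ, X = P * (w.re - z.re) := ⟨_, rfl⟩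
  obtain ⟨Y, hYdef⟩ : ∃ Y : ℤ → ℝ,
    ∀ k : ℤ, Y k = P * ((w - z).im - 2*Real.pi*(k:ℝ)) := ⟨_, fun _ => rfl⟩
  have key : ∀ k : ℤ, -(Real.pi : ℂ) * ((w - z) / (Real.log t : ℂ) -
      2 * (Real.pi : ℂ) * Complex.I * (k : ℂ) / (Real.log t : ℂ)) =
      ((X:ℝ):ℂ) + ((Y k : ℝ):ℂ) * Complex.I := by
    intro k
    have hwz : w - z = ((w.re - z.re : ℝ):ℂ) + (((w-z).im : ℝ):ℂ) * Complex.I := by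
      simp [Complex.ext_iff]
    rw [hwz, hXdef, hYdef k, hPdef]
    push_cast
    rw [div_neg]
    field_simp
    ring
  obtain ⟨F, hFdef⟩ : ∃ F : ℤ → ℝ, ∀ k : ℤ, F k =
    ‖Complex.sin ((X:ℂ) + ((Y k : ℝ):ℂ) * Complex.I)‖⁻¹ := ⟨_, fun _ => rfl⟩
  have hfun : (fun k : ℤ =>
      ‖Complex.sin (-(Real.pi : ℂ) * ((w - z) / (Real.log t : ℂ) -
        2 * (Real.pi : ℂ) * Complex.I * (k : ℂ) / (Real.log t : ℂ)))‖⁻¹) = F := by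
    funext k
    rw [key k, hFdef k]
  -- bounds on X
  have hXnonpos : X ≤ 0 := hXdef ▸ mul_nonpos_of_nonneg_of_nonpos hP.le (by linarith)
  have habsX : |X| = P * (z.re - w.re) := by
    rw [abs_of_nonpos hXnonpos, hXdef]; ring
  have hPU : P * U < Real.pi / 10 := by
    rw [hPdef, div_mul_eq_mul_div, div_lt_div_iff₀ hLpos (by norm_num : (0:ℝ) < 10)]
    have h10 : 10*U < -Real.log t := by linarith
    have := mul_lt_mul_of_pos_left h10 Real.pi_pos
    linarith
  have hXub : |X| ≤ Real.pi / 5 := by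
    rw [habsX]
    have h1 : z.re - w.re ≤ 2*U := by linarith
    have h2 : P * (z.re - w.re) ≤ P * (2*U) := mul_le_mul_of_nonneg_left h1 hP.le
    have h3 : P*(2*U) = 2*(P*U) := by ring
    linarith
  have hXub2 : |X| ≤ Real.pi / 2 := le_trans hXub (by linarith [Real.pi_pos])
  have hXlb : P * u ≤ |X| := by
    rw [habsX]
    have h : u ≤ z.re - w.re := by linarith
    exact mul_le_mul_of_nonneg_left h hP.le
  have hsinX : 2/Real.pi * (P*u) ≤ Real.sin |X| := by
    have h1 : 2/Real.pi * (P*u) ≤ 2/Real.pi * |X| :=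
      mul_le_mul_of_nonneg_left hXlb (by positivity)
    exact h1.trans (Real.mul_le_sin (abs_nonneg X) hXub2)
  have hsabs : Real.sin |X| ≤ |Real.sin X| := by
    rcases abs_cases X with ⟨h1, _⟩ | ⟨h1, _⟩
    · rw [h1]; exact le_abs_self _
    · rw [h1, Real.sin_neg]; exact neg_le_abs _
  have hPu : (0:ℝ) < 2/Real.pi * (P*u) := by positivity
  have hA : ∀ k : ℤ, F k ≤ ((-Real.log t)/2) * u⁻¹ := by
    intro k
    have h1 : 2/Real.pi * (P*u) ≤ ‖Complex.sin ((X:ℂ) + ((Y k : ℝ):ℂ) * Complex.I)‖ :=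
      hsinX.trans (hsabs.trans (abs_sin_lb_re X (Y k)))
    have h2 := inv_anti₀ hPu h1
    rw [hFdef k]
    refine le_trans h2 (le_of_eq ?_)
    rw [hPdef]
    have hune : u ≠ 0 := ne_of_gt hu
    rw [div_neg]
    field_simp
  obtain ⟨d, hddef⟩ : ∃ d : ℝ, d = (w - z).im / (2 * Real.pi) := ⟨_, rfl⟩
  obtain ⟨m, hmdef⟩ : ∃ m : ℤ, m = round d := ⟨_, rfl⟩
  have hB : ∀ k : ℤ, k ≠ m → F k ≤ K * r ^ ((k - m).natAbs) := by
    intro k hk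
    obtain ⟨n, hndef⟩ : ∃ n : ℕ, n = (k - m).natAbs := ⟨_, rfl⟩
    have hn1 : 1 ≤ n := hndef ▸ Int.natAbs_pos.mpr (sub_ne_zero.mpr hk)
    have hnR : (1:ℝ) ≤ (n:ℝ) := by exact_mod_cast hn1
    have hd : |d - (m:ℝ)| ≤ 1/2 := by rw [hmdef]; exact abs_sub_round d
    have hkm : ((n:ℝ)) = |(k:ℝ) - (m:ℝ)| := by
      rw [hndef]
      push_cast [Nat.cast_natAbs]
      ring_nf
    have htri : |(k:ℝ) - (m:ℝ)| ≤ |(k:ℝ) - d| + |d - (m:ℝ)| := abs_sub_le _ _ _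
    rw [← hkm, abs_sub_comm (k:ℝ) d] at htri
    have hdk : (n:ℝ)/2 ≤ |d - (k:ℝ)| := by linarith
    have hYeq : Y k = P*(2*Real.pi)*(d - (k:ℝ)) := by
      rw [hYdef k]
      have hb : (w - z).im = 2*Real.pi*d := by
        rw [hddef]
        field_simp
      rw [hb]
      ring
    have hyk : Real.pi * P * (n:ℝ) ≤ |Y k| := by
      calc Real.pi * P * (n:ℝ) = P*(2*Real.pi) * ((n:ℝ)/2) := by ring
        _ ≤ P*(2*Real.pi) * |d - (k:ℝ)| :=
            mul_le_mul_of_nonneg_left hdk (by positivity)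
        _ = |P*(2*Real.pi)*(d - (k:ℝ))| := by
            rw [abs_mul, abs_of_pos (by positivity : (0:ℝ) < P*(2*Real.pi))]
        _ = |Y k| := by rw [hYeq]
    have hsinh : Real.sinh (Real.pi*P*(n:ℝ)) ≤ |Real.sinh (Y k)| := by
      rw [Real.abs_sinh]; exact Real.sinh_le_sinh.mpr hyk
    have hnpos : (0:ℝ) < (n:ℝ) := by linarith
    have hsinhpos : 0 < Real.sinh (Real.pi*P*(n:ℝ)) :=
      Real.sinh_pos_iff.mpr (mul_pos (mul_pos Real.pi_pos hP) hnpos)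
    have h1 : F k ≤ (Real.sinh (Real.pi*P*(n:ℝ)))⁻¹ := by
      rw [hFdef k]
      exact inv_anti₀ hsinhpos (hsinh.trans (abs_sin_lb_im X (Y k)))
    have hq : r^n = Real.exp (-(Real.pi*P*(n:ℝ))) := by
      rw [hrdef, ← Real.exp_nat_mul]
      congr 1
      ring
    have hsinh_eq : Real.sinh (Real.pi*P*(n:ℝ)) = ((r^n)⁻¹ - r^n)/2 := by
      rw [Real.sinh_eq, hq, Real.exp_neg, inv_inv]
    have h2 : (Real.sinh (Real.pi*P*(n:ℝ)))⁻¹ ≤ K * r^n := by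
      obtain ⟨q, hqdef⟩ : ∃ q : ℝ, q = r^n := ⟨_, rfl⟩
      have hq0 : 0 < q := hqdef ▸ pow_pos hr0 n
      have hq2 : q^2 ≤ r^2 := by
        rw [hqdef, ← pow_mul]
        exact pow_le_pow_of_le_one hr0.le hr1.le (by omega)
      have h1q : 0 < 1 - q^2 := by linarith
      have heq : ((q⁻¹ - q)/2) = (1-q^2)/(2*q) := by field_simp
      rw [hsinh_eq, ← hqdef, heq, inv_div, div_le_iff₀ h1q]
      have e0 : 2*q = K*(1-r^2)*q := by rw [hK2]
      have e2 : 0 ≤ K*q*(r^2-q^2) := mul_nonneg (mul_nonneg hK.le hq0.le) (by linarith)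
      linarith [e0, e2]
    rw [← hndef]
    exact h1.trans h2
  have hg1 : Summable (fun k : ℤ => if k = m then ((-Real.log t)/2) * u⁻¹ else (0:ℝ)) := by
    apply summable_of_ne_finset_zero (s := {m})
    intro k hk
    simp only [Finset.mem_singleton] at hk
    simp [hk]
  have hg2 : Summable (fun k : ℤ => K * r ^ ((k - m).natAbs)) := by
    have h := ((geoZ hr0.le hr1).mul_left K)
    have h2 := h.comp_injective (Equiv.subRight m).injective
    exact h2
  have hgsum : Summable (fun k : ℤ =>
      (if k = m then ((-Real.log t)/2) * u⁻¹ else (0:ℝ)) + K * r ^ ((k - m).natAbs)) :=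
    hg1.add hg2
  have hFg : ∀ k, F k ≤
      (if k = m then ((-Real.log t)/2) * u⁻¹ else (0:ℝ)) + K * r ^ ((k - m).natAbs) := by
    intro k
    by_cases hk : k = m
    · subst hk
      rw [if_pos rfl]
      have h1 := hA k
      have hKr : 0 < K * r ^ ((k - k).natAbs) := mul_pos hK (pow_pos hr0 _)
      linarith
    · rw [if_neg hk]
      have := hB k hk
      linarith
  have hF0 : ∀ k, 0 ≤ F k := fun k => by rw [hFdef k]; positivity
  have hFsum : Summable F := Summable.of_nonneg_of_le hF0 hFg hgsum
  have hshift : (∑' k : ℤ, r ^ ((k - m).natAbs)) = ∑' j : ℤ, r ^ (j.natAbs) := by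
    have := (Equiv.subRight m).tsum_eq (fun j : ℤ => r ^ (j.natAbs))
    simpa using this
  have htsum : ∑' k, F k ≤ ((-Real.log t)/2) * u⁻¹ + K * (2/(1-r)) := by
    have hc : ∑' k, F k ≤ ∑' k : ℤ,
        ((if k = m then ((-Real.log t)/2) * u⁻¹ else (0:ℝ)) + K * r ^ ((k - m).natAbs)) :=
      Summable.tsum_le_tsum hFg hFsum hgsum
    have he : (∑' k : ℤ,
        ((if k = m then ((-Real.log t)/2) * u⁻¹ else (0:ℝ)) + K * r ^ ((k - m).natAbs)))
        = ((-Real.log t)/2) * u⁻¹ + K * ∑' k : ℤ, r ^ ((k - m).natAbs) := by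
      rw [Summable.tsum_add hg1 hg2, tsum_ite_eq, tsum_mul_left]
    have hgeo : K * (∑' k : ℤ, r ^ ((k - m).natAbs)) ≤ K * (2/(1-r)) := by
      rw [hshift]
      exact mul_le_mul_of_nonneg_left (geoZsum hr0.le hr1) hK.le
    rw [he] at hc
    linarith
  refine ⟨part1, ?_, ?_⟩
  · rw [hfun]; exact hFsum
  · rw [hfun]
    refine htsum.trans ?_
    have hBu : K * (2/(1-r)) ≤ K * (2/(1-r)) * u⁻¹ := by
      have := mul_le_mul_of_nonneg_left hui hB0.le
      linarith
    have h8 : (1 + (-Real.log t)/2 + K*(2/(1-r)))*u⁻¹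
        = u⁻¹ + ((-Real.log t)/2)*u⁻¹ + K*(2/(1-r))*u⁻¹ := by ring
    linarith
end

section
/- Let a ∈ (0,1). Then there exists A₀ ∈ (0,1), depending on a, such that: (i) the functions S_a(z) and R_a(z) are holomorphic on the vertical strip {z ∈ ℂ : |Re(z)| < π·A₀}; (ii) for every A ∈ (0, A₀) and every ε ∈ {−1, 1}, the function y ↦ Re[S_a(Ay + ε·iy)] is nonincreasing on [0, π] and the function y ↦ Re[S_a(−Ay + ε·iy)] is nondecreasing on [0, π]; and (iii) for every ε ∈ {−1, 1}, the function y ↦ Re[R_a(ε·iy)] is nonincreasing on [0, π]. -/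
noncomputable def Sa (a : ℝ) (z : ℂ) : ℂ :=
  Complex.log (1 + (a : ℂ) * Complex.exp z) - Complex.log (1 + (a : ℂ) * Complex.exp (-z)) -
    2 * (a : ℂ) * z / (1 + (a : ℂ))

noncomputable def Ra (a : ℝ) (z : ℂ) : ℂ :=
  Complex.log (1 + (a : ℂ) * Complex.exp (-z)) - Complex.log (1 + (a : ℂ)) +
    (a : ℂ) * z / (1 + (a : ℂ))

set_option maxHeartbeats 1000000

lemma small_exp {a x : ℝ} (ha0 : 0 < a) (ha1 : a < 1) (hx : x ≤ (1 - a) / 2) :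
    a * Real.exp x < 1 := by
  have h := Real.log_lt_sub_one_of_pos ha0 (by linarith : a ≠ 1)
  have he : a * Real.exp x = Real.exp (Real.log a + x) := by
    rw [Real.exp_add, Real.exp_log ha0]
  rw [he, ← Real.exp_zero]
  exact Real.exp_lt_exp.mpr (by linarith)

lemma one_add_mem {w : ℂ} (h : ‖w‖ < 1) : 1 + w ∈ Complex.slitPlane := by
  refine Complex.mem_slitPlane_iff.mpr (Or.inl ?_)
  have h2 := (abs_le.mp (Complex.abs_re_le_norm w)).1
  simp only [Complex.add_re, Complex.one_re]
  linarith

lemma abs_a_exp {a : ℝ} (ha0 : 0 < a) (ha1 : a < 1) {z : ℂ} (hz : z.re ≤ (1 - a) / 2) :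
    ‖(a : ℂ) * Complex.exp z‖ < 1 := by
  rw [norm_mul, Complex.norm_real, Real.norm_eq_abs, Complex.norm_exp, _root_.abs_of_pos ha0]
  exact small_exp ha0 ha1 hz

lemma SaHasDeriv {a : ℝ} (ha0 : 0 < a) (ha1 : a < 1) {z : ℂ} (hz : |z.re| ≤ (1 - a) / 2) :
    HasDerivAt (Sa a)
      ((1 + (a:ℂ) * Complex.exp z)⁻¹ * ((a:ℂ) * Complex.exp z)
        - (1 + (a:ℂ) * Complex.exp (-z))⁻¹ * ((a:ℂ) * (Complex.exp (-z) * -1))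
        - 2 * (a:ℂ) / (1 + (a:ℂ))) z := by
  have hm1 : 1 + (a:ℂ) * Complex.exp z ∈ Complex.slitPlane :=
    one_add_mem (abs_a_exp ha0 ha1 (le_trans (le_abs_self _) hz))
  have hm2 : 1 + (a:ℂ) * Complex.exp (-z) ∈ Complex.slitPlane :=
    one_add_mem (abs_a_exp ha0 ha1 (by rw [Complex.neg_re]; linarith [(abs_le.mp hz).1]))
  have hinner1 : HasDerivAt (fun w : ℂ => 1 + (a:ℂ) * Complex.exp w) ((a:ℂ) * Complex.exp z) z :=
    ((Complex.hasDerivAt_exp z).const_mul (a:ℂ)).const_add 1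
  have hd1 : HasDerivAt (fun w : ℂ => Complex.log (1 + (a:ℂ) * Complex.exp w))
      ((1 + (a:ℂ) * Complex.exp z)⁻¹ * ((a:ℂ) * Complex.exp z)) z := by
    simpa [Function.comp_def] using (Complex.hasDerivAt_log hm1).comp z hinner1
  have hneg : HasDerivAt (fun w : ℂ => -w) (-1 : ℂ) z := by
    exact hasDerivAt_neg z
  have hexpneg : HasDerivAt (fun w : ℂ => Complex.exp (-w)) (Complex.exp (-z) * -1) z := by
    simpa [Function.comp_def] using (Complex.hasDerivAt_exp (-z)).comp z hneg
  have hinner2 : HasDerivAt (fun w : ℂ => 1 + (a:ℂ) * Complex.exp (-w))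
      ((a:ℂ) * (Complex.exp (-z) * -1)) z :=
    (hexpneg.const_mul (a:ℂ)).const_add 1
  have hd2 : HasDerivAt (fun w : ℂ => Complex.log (1 + (a:ℂ) * Complex.exp (-w)))
      ((1 + (a:ℂ) * Complex.exp (-z))⁻¹ * ((a:ℂ) * (Complex.exp (-z) * -1))) z := by
    simpa [Function.comp_def] using (Complex.hasDerivAt_log hm2).comp z hinner2
  have hd3 : HasDerivAt (fun w : ℂ => 2 * (a:ℂ) * w / (1 + (a:ℂ))) (2 * (a:ℂ) / (1 + (a:ℂ))) z := by
    have := ((hasDerivAt_id z).const_mul (2 * (a:ℂ))).div_const (1 + (a:ℂ))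
    simpa using this
  exact (hd1.sub hd2).sub hd3

lemma RaHasDeriv {a : ℝ} (ha0 : 0 < a) (ha1 : a < 1) {z : ℂ} (hz : |z.re| ≤ (1 - a) / 2) :
    HasDerivAt (Ra a)
      ((1 + (a:ℂ) * Complex.exp (-z))⁻¹ * ((a:ℂ) * (Complex.exp (-z) * -1)) - 0
        + (a:ℂ) / (1 + (a:ℂ))) z := by
  have hm2 : 1 + (a:ℂ) * Complex.exp (-z) ∈ Complex.slitPlane :=
    one_add_mem (abs_a_exp ha0 ha1 (by rw [Complex.neg_re]; linarith [(abs_le.mp hz).1]))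
  have hneg : HasDerivAt (fun w : ℂ => -w) (-1 : ℂ) z := by
    exact hasDerivAt_neg z
  have hexpneg : HasDerivAt (fun w : ℂ => Complex.exp (-w)) (Complex.exp (-z) * -1) z := by
    simpa [Function.comp_def] using (Complex.hasDerivAt_exp (-z)).comp z hneg
  have hinner2 : HasDerivAt (fun w : ℂ => 1 + (a:ℂ) * Complex.exp (-w))
      ((a:ℂ) * (Complex.exp (-z) * -1)) z :=
    (hexpneg.const_mul (a:ℂ)).const_add 1
  have hd2 : HasDerivAt (fun w : ℂ => Complex.log (1 + (a:ℂ) * Complex.exp (-w)))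
      ((1 + (a:ℂ) * Complex.exp (-z))⁻¹ * ((a:ℂ) * (Complex.exp (-z) * -1))) z := by
    simpa [Function.comp_def] using (Complex.hasDerivAt_log hm2).comp z hinner2
  have hd3 : HasDerivAt (fun w : ℂ => (a:ℂ) * w / (1 + (a:ℂ))) ((a:ℂ) / (1 + (a:ℂ))) z := by
    have := ((hasDerivAt_id z).const_mul ((a:ℂ))).div_const (1 + (a:ℂ))
    simpa using this
  exact (hd2.sub (hasDerivAt_const z _)).add hd3

lemma exp_quad {t : ℝ} (h : |t| ≤ 1) : Real.exp t ≤ 1 + t + (3/4) * t^2 := by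
  have h2 := Real.exp_bound h (by norm_num : 0 < 2)
  rw [Finset.sum_range_succ, Finset.sum_range_succ, Finset.sum_range_zero] at h2
  norm_num at h2
  have h3 := (abs_le.mp h2).2
  have h4 : |t| ^ 2 = t ^ 2 := _root_.sq_abs t
  nlinarith [_root_.sq_abs t]

lemma cosh_quad {t : ℝ} (h : |t| ≤ 1) : Real.cosh t ≤ 1 + t^2 := by
  have h1 := exp_quad h
  have h2 := exp_quad (by rwa [abs_neg] : |(-t)| ≤ 1)
  rw [Real.cosh_eq]
  nlinarith [sq_nonneg t]

lemma sinh_quad {t : ℝ} (h0 : 0 ≤ t) (h : t ≤ 1) : Real.sinh t ≤ t + t^2 := by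
  have h1 := exp_quad (by rw [_root_.abs_of_nonneg h0]; exact h)
  have h2 := Real.add_one_le_exp (-t)
  rw [Real.sinh_eq]
  nlinarith [sq_nonneg t]

lemma coshcos {A y : ℝ} (hA0 : 0 < A) (hA : A ≤ 1/10) (hy0 : 0 ≤ y) (hyπ : y ≤ Real.pi) :
    Real.cosh (A * y) * Real.cos y ≤ 1 := by
  have hpi := Real.pi_lt_d2
  have hAy0 : 0 ≤ A * y := mul_nonneg hA0.le hy0
  have hAy1 : A * y ≤ 0.315 := by nlinarith
  have hcosh : Real.cosh (A * y) ≤ 1 + (A * y)^2 :=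
    cosh_quad (by rw [_root_.abs_of_nonneg hAy0]; nlinarith)
  have hcosh1 : 1 ≤ Real.cosh (A * y) := Real.one_le_cosh _
  rcases le_or_gt y 1 with hy1 | hy1
  · have hcb := Real.cos_bound (by rw [_root_.abs_of_nonneg hy0]; exact hy1)
    have hc2 : Real.cos y ≤ 1 - y^2/2 + y^4 * (5/96) := by
      have := (abs_le.mp hcb).2
      rw [_root_.abs_of_nonneg hy0] at this
      nlinarith
    have hcpos : 0 ≤ Real.cos y := Real.cos_nonneg_of_mem_Icc
      ⟨by linarith [Real.pi_gt_three], by linarith [Real.pi_gt_three]⟩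
    have hup : Real.cosh (A*y) * Real.cos y ≤ (1 + (A*y)^2) * (1 - y^2/2 + y^4 * (5/96)) := by
      have h1 : Real.cos y ≤ 1 - y^2/2 + y^4 * (5/96) := hc2
      nlinarith [mul_le_mul_of_nonneg_left h1 (le_trans (by norm_num) hcosh1 : (0:ℝ) ≤ Real.cosh (A*y)), mul_le_mul_of_nonneg_right hcosh (le_trans hcpos h1 : (0:ℝ) ≤ 1 - y^2/2 + y^4 * (5/96))]
    have hA2 : A^2 ≤ 1/100 := by nlinarith
    have hy2 : y^2 ≤ 1 := by nlinarith
    have h4 : y^4 ≤ y^2 := by nlinarith [sq_nonneg y]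
    have hB : A^2*y^2 ≤ y^2/100 := by linarith [mul_le_mul_of_nonneg_right hA2 (sq_nonneg y)]
    have hy4 : y^4 ≤ 1 := by nlinarith [sq_nonneg (y*y), sq_nonneg y]
    have hA2y6 : A^2*y^6 ≤ y^2/100 := by
      calc A^2*y^6 = (A^2*y^2) * y^4 := by ring
        _ ≤ (y^2/100) * 1 := mul_le_mul hB hy4 (by positivity) (by positivity)
        _ = y^2/100 := by ring
    have hA2y4 : 0 ≤ A^2*y^4 := by positivity
    have hR : (1 + (A*y)^2) * (1 - y^2/2 + y^4 * (5/96)) ≤ 1 := by ring_nf; linarith [h4]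
    linarith
  · have hc1 : Real.cos y ≤ Real.cos 1 :=
      Real.cos_le_cos_of_nonneg_of_le_pi (by norm_num) hyπ hy1.le
    have hc3 : Real.cos y ≤ 2/3 := le_trans hc1 (Real.cos_one_le.trans (by norm_num))
    have : Real.cosh (A*y) * Real.cos y ≤ Real.cosh (A*y) * (2/3) :=
      mul_le_mul_of_nonneg_left hc3 (by linarith)
    nlinarith

lemma bracket_le {a A y : ℝ} (ha0 : 0 < a) (ha1 : a < 1) (hA0 : 0 < A) (hA : A ≤ 1/10)
    (hA2 : Real.pi * A ≤ (1 - a) / 2) (hy0 : 0 ≤ y) (hyπ : y ≤ Real.pi) :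
    2*a*A*((1 - Real.cosh (A*y) * Real.cos y)^2 + (Real.sinh (A*y) * Real.sin y)^2)
      ≤ (1+a)^2 * (A * (1 - Real.cosh (A*y) * Real.cos y) + Real.sinh (A*y) * Real.sin y) := by
  have hπ := Real.pi_pos
  set P := 1 - Real.cosh (A*y) * Real.cos y with hP
  set Q := Real.sinh (A*y) * Real.sin y with hQ
  have hAy0 : 0 ≤ A * y := mul_nonneg hA0.le hy0
  have hAy : A * y ≤ (1 - a)/2 := by nlinarith
  have hAy1 : A * y ≤ 1/2 := by linarith
  have hP0 : 0 ≤ P := by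
    have := coshcos hA0 hA hy0 hyπ
    rw [hP]; linarith
  have hQ0 : 0 ≤ Q := mul_nonneg (Real.sinh_nonneg_iff.mpr hAy0)
    (Real.sin_nonneg_of_nonneg_of_le_pi hy0 hyπ)
  have hcosh : Real.cosh (A*y) ≤ 1 + (A*y)^2 :=
    cosh_quad (by rw [_root_.abs_of_nonneg hAy0]; linarith)
  have hPle : P ≤ 2 + (A*y)^2 := by
    have hcos : -1 ≤ Real.cos y := Real.neg_one_le_cos y
    have hcpos : 0 < Real.cosh (A*y) := Real.cosh_pos _
    have : -(Real.cosh (A*y)) ≤ Real.cosh (A*y) * Real.cos y := by nlinarith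
    rw [hP]; nlinarith
  have h1 : 2*a*P ≤ (1+a)^2 := by nlinarith [sq_nonneg (A*y), sq_nonneg (1-a)]
  have hsinh : Real.sinh (A*y) ≤ 3/4 := by
    have := sinh_quad hAy0 (by linarith)
    nlinarith
  have hQle : Q ≤ 3/4 := by
    have hs1 : Real.sin y ≤ 1 := Real.sin_le_one y
    have hs0 : 0 ≤ Real.sinh (A*y) := Real.sinh_nonneg_iff.mpr hAy0
    rw [hQ]; nlinarith
  have h2 : 2*a*A*Q ≤ (1+a)^2 := by
    have haA : a*A ≤ 1*(1/10) := mul_le_mul ha1.le hA hA0.le (by norm_num)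
    have haAQ : (a*A)*Q ≤ (1/10)*(3/4) := by
      apply mul_le_mul (by linarith) hQle hQ0 (by norm_num)
    nlinarith [sq_nonneg a]
  nlinarith [mul_le_mul_of_nonneg_right h1 (mul_nonneg hA0.le hP0),
    mul_le_mul_of_nonneg_right h2 hQ0]

lemma keyS {a A σ ε : ℝ} (ha0 : 0 < a) (ha1 : a < 1) (hA0 : 0 < A) (hA : A ≤ 1/10)
    (hA2 : Real.pi * A ≤ (1 - a) / 2) (hσ : σ = -1 ∨ σ = 1) (hε : ε = -1 ∨ ε = 1)
    {y : ℝ} (hy0 : 0 ≤ y) (hyπ : y ≤ Real.pi) :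
    ∃ d : ℝ, HasDerivAt
      (fun t : ℝ => (Sa a (((σ:ℂ) * (A:ℂ) + (ε:ℂ) * Complex.I) * (t:ℂ))).re) d y ∧
      σ * d ≤ 0 := by
  have hπ := Real.pi_pos
  set c : ℂ := (σ:ℂ) * (A:ℂ) + (ε:ℂ) * Complex.I with hc
  set z : ℂ := c * (y:ℂ) with hz
  have hAy0 : 0 ≤ A * y := mul_nonneg hA0.le hy0
  have hAy : A * y ≤ (1 - a) / 2 := by nlinarith
  have habsσ : |σ| = 1 := by rcases hσ with h | h <;> rw [h] <;> norm_num
  have hzre : z.re = σ * (A * y) := by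
    rw [hz, hc]
    simp [Complex.add_re, Complex.mul_re, Complex.I_re, Complex.I_im,
      Complex.ofReal_re, Complex.ofReal_im]
    ring
  have hzabs : |z.re| ≤ (1 - a) / 2 := by
    rw [hzre, abs_mul, habsσ, one_mul, _root_.abs_of_nonneg hAy0]; exact hAy
  -- derivative of Sa at z
  have hS := SaHasDeriv ha0 ha1 hzabs
  set u : ℂ := Complex.exp z with hu
  have hu0 : u ≠ 0 := Complex.exp_ne_zero z
  have hexpneg : Complex.exp (-z) = u⁻¹ := by
    rw [Complex.exp_neg]
  rw [hexpneg] at hS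
  have hm1 : ‖(a:ℂ) * u‖ < 1 :=
    abs_a_exp ha0 ha1 (le_trans (le_abs_self _) hzabs)
  have hm2 : ‖(a:ℂ) * u⁻¹‖ < 1 := by
    rw [← hexpneg]
    exact abs_a_exp ha0 ha1 (by rw [Complex.neg_re]; linarith [(abs_le.mp hzabs).1])
  have hF1 : (1 : ℂ) + (a:ℂ) * u ≠ 0 := Complex.slitPlane_ne_zero (one_add_mem hm1)
  have hF2 : (1 : ℂ) + (a:ℂ) * u⁻¹ ≠ 0 := Complex.slitPlane_ne_zero (one_add_mem hm2)
  have ha1c : (1 : ℂ) + (a:ℂ) ≠ 0 := by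
    have : ((1 + a : ℝ) : ℂ) ≠ 0 := Complex.ofReal_ne_zero.mpr (by linarith)
    simpa using this
  set dS : ℂ := (1 + (a:ℂ) * u)⁻¹ * ((a:ℂ) * u)
      - (1 + (a:ℂ) * u⁻¹)⁻¹ * ((a:ℂ) * (u⁻¹ * -1)) - 2 * (a:ℂ) / (1 + (a:ℂ)) with hdS
  -- path derivative
  have hlin : HasDerivAt (fun w : ℂ => c * w) c (y:ℂ) := by
    simpa using (hasDerivAt_id ((y:ℂ))).const_mul c
  have hpath0 : HasDerivAt (fun w : ℂ => Sa a (c * w)) (dS * c) (y:ℂ) := by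
    simpa [Function.comp_def] using hS.comp (y:ℂ) hlin
  have hpath : HasDerivAt (fun t : ℝ => Sa a (c * (t:ℂ))) (dS * c) y := hpath0.comp_ofReal
  have hre : HasDerivAt (fun t : ℝ => (Sa a (c * (t:ℂ))).re) ((dS * c).re) y := by
    exact hpath0.real_of_complex
  refine ⟨(dS * c).re, hre, ?_⟩
  -- algebra
  set W : ℂ := (u + u⁻¹) / 2 - 1 with hW
  set D : ℂ := (1 + (a:ℂ) * u) * (1 + (a:ℂ) * u⁻¹) with hD
  have hD0 : D ≠ 0 := mul_ne_zero hF1 hF2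
  have hua : u + (a:ℂ) ≠ 0 := by
    intro h
    apply hF2
    have : (1 + (a:ℂ) * u⁻¹) * u = u + (a:ℂ) := by field_simp
    have h2 : (1 + (a:ℂ) * u⁻¹) * u = 0 := by rw [this, h]
    rcases mul_eq_zero.mp h2 with h3 | h3
    · exact h3
    · exact absurd h3 hu0
  have hform : dS * c = ((2 * a * (1 - a) / (1 + a) : ℝ) : ℂ) * (c * W) / D := by
    rw [hdS, hW, hD]
    push_cast
    field_simp [hua]
    ring
  set n : ℝ := Complex.normSq D with hn
  have hnpos : 0 < n := Complex.normSq_pos.mpr hD0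
  have hform2 : dS * c
      = ((2 * a * (1 - a) / (1 + a) : ℝ) : ℂ) * ((c * W) * (starRingEnd ℂ) D) / (n : ℂ) := by
    rw [hform, div_eq_div_iff hD0 (Complex.ofReal_ne_zero.mpr hnpos.ne')]
    rw [hn, ← Complex.mul_conj D]
    ring
  have hdval : (dS * c).re
      = (2 * a * (1 - a) / (1 + a)) * ((c * W) * (starRingEnd ℂ) D).re / n := by
    rw [hform2, Complex.div_ofReal_re, Complex.re_ofReal_mul]
  -- identify W
  have hzrw : z = ((σ * (A * y) : ℝ) : ℂ) + ((ε * y : ℝ) : ℂ) * Complex.I := by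
    rw [hz, hc]; push_cast; ring
  have hu_eq : u = ((Real.exp (σ * (A * y)) : ℝ) : ℂ)
      * (((Real.cos (ε * y) : ℝ) : ℂ) + ((Real.sin (ε * y) : ℝ) : ℂ) * Complex.I) := by
    rw [hu, hzrw, Complex.exp_add, Complex.exp_mul_I, ← Complex.ofReal_exp,
      ← Complex.ofReal_cos, ← Complex.ofReal_sin]
  have huinv_eq : u⁻¹ = ((Real.exp (-(σ * (A * y))) : ℝ) : ℂ)
      * (((Real.cos (ε * y) : ℝ) : ℂ) - ((Real.sin (ε * y) : ℝ) : ℂ) * Complex.I) := by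
    rw [← hexpneg, hzrw]
    rw [show -(((σ * (A * y) : ℝ) : ℂ) + ((ε * y : ℝ) : ℂ) * Complex.I)
        = ((-(σ * (A * y)) : ℝ) : ℂ) + ((-(ε * y) : ℝ) : ℂ) * Complex.I by push_cast; ring]
    rw [Complex.exp_add, Complex.exp_mul_I, ← Complex.ofReal_exp,
      ← Complex.ofReal_cos, ← Complex.ofReal_sin, Real.cos_neg, Real.sin_neg]
    push_cast
    ring
  have hc1 : Real.exp (σ * (A * y)) + Real.exp (-(σ * (A * y))) = 2 * Real.cosh (A * y) := by
    rcases hσ with h | h <;> rw [h] <;> rw [Real.cosh_eq] <;> ring_nf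
  have hc2 : Real.exp (σ * (A * y)) - Real.exp (-(σ * (A * y)))
      = 2 * (σ * Real.sinh (A * y)) := by
    rcases hσ with h | h <;> rw [h] <;> rw [Real.sinh_eq] <;> ring_nf
  have hc3 : Real.cos (ε * y) = Real.cos y := by
    rcases hε with h | h <;> rw [h] <;> simp
  have hc4 : Real.sin (ε * y) = ε * Real.sin y := by
    rcases hε with h | h <;> rw [h] <;> simp
  have hc1c : ((Real.exp (σ * (A * y)) : ℝ) : ℂ) + ((Real.exp (-(σ * (A * y))) : ℝ) : ℂ)
      = 2 * ((Real.cosh (A * y) : ℝ) : ℂ) := by exact_mod_cast congrArg (fun t : ℝ => (t : ℂ)) hc1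
  have hc2c : ((Real.exp (σ * (A * y)) : ℝ) : ℂ) - ((Real.exp (-(σ * (A * y))) : ℝ) : ℂ)
      = 2 * (((σ : ℝ) : ℂ) * ((Real.sinh (A * y) : ℝ) : ℂ)) := by
    exact_mod_cast congrArg (fun t : ℝ => (t : ℂ)) hc2
  have hc5 : Real.cosh (σ * (A * y)) = Real.cosh (A * y) := by
    rcases hσ with h | h <;> rw [h] <;> simp
  have hc6 : Real.sinh (σ * (A * y)) = σ * Real.sinh (A * y) := by
    rcases hσ with h | h <;> rw [h] <;> simp
  have hWc : W = Complex.cosh z - 1 := by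
    rw [hW, Complex.cosh]
    rw [hexpneg, hu]
  have hcoshz : Complex.cosh z = ((Real.cosh (σ*(A*y)) * Real.cos (ε*y) : ℝ) : ℂ)
      + ((Real.sinh (σ*(A*y)) * Real.sin (ε*y) : ℝ) : ℂ) * Complex.I := by
    rw [hzrw, Complex.cosh_add, Complex.cosh_mul_I, Complex.sinh_mul_I,
      ← Complex.ofReal_cosh, ← Complex.ofReal_sinh, ← Complex.ofReal_cos, ← Complex.ofReal_sin]
    push_cast
    ring
  have hWeq : W = ((Real.cosh (A * y) * Real.cos y - 1 : ℝ) : ℂ)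
      + ((σ * ε * (Real.sinh (A * y) * Real.sin y) : ℝ) : ℂ) * Complex.I := by
    rw [hWc, hcoshz, hc3, hc4, hc5, hc6]
    push_cast
    ring
  have hDval : D = (((1 + a)^2 : ℝ) : ℂ) + ((2 * a : ℝ) : ℂ) * W := by
    rw [hD, hW]
    push_cast
    field_simp [hua]
    ring
  -- the bracket
  have hbr : σ * ((c * W) * (starRingEnd ℂ) D).re
      = 2*a*A*((1 - Real.cosh (A*y) * Real.cos y)^2 + (Real.sinh (A*y) * Real.sin y)^2)
        - (1+a)^2 * (A * (1 - Real.cosh (A*y) * Real.cos y) + Real.sinh (A*y) * Real.sin y) := by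
    rw [hDval, hWeq, hc]
    simp only [map_add, map_mul, Complex.conj_ofReal, Complex.conj_I, map_sub, map_one]
    rcases hσ with h | h <;> rcases hε with h' | h' <;> rw [h, h'] <;>
      simp only [Complex.add_re, Complex.add_im, Complex.mul_re, Complex.mul_im, Complex.sub_re,
        Complex.sub_im, Complex.I_re, Complex.I_im, Complex.ofReal_re, Complex.ofReal_im,
        Complex.one_re, Complex.one_im, Complex.neg_re, Complex.neg_im] <;>
      ring
  have hbrle := bracket_le ha0 ha1 hA0 hA hA2 hy0 hyπ
  have hK : 0 < 2 * a * (1 - a) / (1 + a) := div_pos (by nlinarith) (by linarith)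
  rw [hdval]
  have heq : σ * ((2 * a * (1 - a) / (1 + a)) * ((c * W) * (starRingEnd ℂ) D).re / n)
      = ((2 * a * (1 - a) / (1 + a)) / n) * (σ * ((c * W) * (starRingEnd ℂ) D).re) := by
    ring
  rw [heq, hbr]
  have h1 : (0:ℝ) ≤ (2 * a * (1 - a) / (1 + a)) / n := le_of_lt (div_pos hK hnpos)
  have h2 : 2*a*A*((1 - Real.cosh (A*y) * Real.cos y)^2 + (Real.sinh (A*y) * Real.sin y)^2)
        - (1+a)^2 * (A * (1 - Real.cosh (A*y) * Real.cos y) + Real.sinh (A*y) * Real.sin y) ≤ 0 := by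
    linarith
  exact mul_nonpos_of_nonneg_of_nonpos h1 h2
lemma keyR {a ε : ℝ} (ha0 : 0 < a) (ha1 : a < 1) (hε : ε = -1 ∨ ε = 1)
    {y : ℝ} (hy0 : 0 ≤ y) (hyπ : y ≤ Real.pi) :
    ∃ d : ℝ, HasDerivAt (fun t : ℝ => (Ra a ((ε:ℂ) * Complex.I * (t:ℂ))).re) d y ∧ d ≤ 0 := by
  set c : ℂ := (ε:ℂ) * Complex.I with hc
  set z : ℂ := c * (y:ℂ) with hz
  have hzre : z.re = 0 := by
    rw [hz, hc]
    simp [Complex.add_re, Complex.mul_re, Complex.I_re, Complex.I_im,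
      Complex.ofReal_re, Complex.ofReal_im]
  have hzabs : |z.re| ≤ (1 - a) / 2 := by rw [hzre]; simp; linarith
  have hR := RaHasDeriv ha0 ha1 hzabs
  set u : ℂ := Complex.exp z with hu
  have hu0 : u ≠ 0 := Complex.exp_ne_zero z
  have hexpneg : Complex.exp (-z) = u⁻¹ := by rw [Complex.exp_neg]
  rw [hexpneg] at hR
  have hm2 : ‖(a:ℂ) * u⁻¹‖ < 1 := by
    rw [← hexpneg]
    exact abs_a_exp ha0 ha1 (by rw [Complex.neg_re]; linarith [(abs_le.mp hzabs).1])
  have hF2 : (1 : ℂ) + (a:ℂ) * u⁻¹ ≠ 0 := Complex.slitPlane_ne_zero (one_add_mem hm2)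
  have ha1c : (1 : ℂ) + (a:ℂ) ≠ 0 := by
    have : ((1 + a : ℝ) : ℂ) ≠ 0 := Complex.ofReal_ne_zero.mpr (by linarith)
    simpa using this
  set dR : ℂ := (1 + (a:ℂ) * u⁻¹)⁻¹ * ((a:ℂ) * (u⁻¹ * -1)) - 0 + (a:ℂ) / (1 + (a:ℂ)) with hdR
  have hlin : HasDerivAt (fun w : ℂ => c * w) c (y:ℂ) := by
    simpa using (hasDerivAt_id ((y:ℂ))).const_mul c
  have hpath0 : HasDerivAt (fun w : ℂ => Ra a (c * w)) (dR * c) (y:ℂ) := by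
    simpa [Function.comp_def] using hR.comp (y:ℂ) hlin
  have hpath : HasDerivAt (fun t : ℝ => Ra a (c * (t:ℂ))) (dR * c) y := hpath0.comp_ofReal
  have hre : HasDerivAt (fun t : ℝ => (Ra a (c * (t:ℂ))).re) ((dR * c).re) y := by
    exact hpath0.real_of_complex
  refine ⟨(dR * c).re, hre, ?_⟩
  have hua : u + (a:ℂ) ≠ 0 := by
    intro h
    apply hF2
    have he : (1 + (a:ℂ) * u⁻¹) * u = u + (a:ℂ) := by field_simp
    have h2 : (1 + (a:ℂ) * u⁻¹) * u = 0 := by rw [he, h]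
    rcases mul_eq_zero.mp h2 with h3 | h3
    · exact h3
    · exact absurd h3 hu0
  set D : ℂ := (1 + (a:ℂ)) * (1 + (a:ℂ) * u⁻¹) with hD
  have hD0 : D ≠ 0 := mul_ne_zero ha1c hF2
  have hform : dR * c = ((a : ℝ) : ℂ) * (c * (1 - u⁻¹)) / D := by
    rw [hdR, hD]
    field_simp [hua]
    ring
  set n : ℝ := Complex.normSq D with hn
  have hnpos : 0 < n := Complex.normSq_pos.mpr hD0
  have hform2 : dR * c = ((a : ℝ) : ℂ) * ((c * (1 - u⁻¹)) * (starRingEnd ℂ) D) / (n : ℂ) := by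
    rw [hform, div_eq_div_iff hD0 (Complex.ofReal_ne_zero.mpr hnpos.ne')]
    rw [hn, ← Complex.mul_conj D]
    ring
  have hdval : (dR * c).re = a * ((c * (1 - u⁻¹)) * (starRingEnd ℂ) D).re / n := by
    rw [hform2, Complex.div_ofReal_re, Complex.re_ofReal_mul]
  have hzrw : z = ((0 : ℝ) : ℂ) + ((ε * y : ℝ) : ℂ) * Complex.I := by
    rw [hz, hc]; push_cast; ring
  have hc3 : Real.cos (ε * y) = Real.cos y := by
    rcases hε with h | h <;> rw [h] <;> simp
  have hc4 : Real.sin (ε * y) = ε * Real.sin y := by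
    rcases hε with h | h <;> rw [h] <;> simp
  have hu_eq : u = ((Real.cos (ε * y) : ℝ) : ℂ) + ((Real.sin (ε * y) : ℝ) : ℂ) * Complex.I := by
    rw [hu, hzrw, Complex.exp_add, Complex.exp_mul_I, ← Complex.ofReal_exp,
      ← Complex.ofReal_cos, ← Complex.ofReal_sin]
    norm_num
  have huinv_eq : u⁻¹ = ((Real.cos (ε * y) : ℝ) : ℂ) - ((Real.sin (ε * y) : ℝ) : ℂ) * Complex.I := by
    rw [← hexpneg, hzrw]
    rw [show -(((0 : ℝ) : ℂ) + ((ε * y : ℝ) : ℂ) * Complex.I)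
        = ((0 : ℝ) : ℂ) + ((-(ε * y) : ℝ) : ℂ) * Complex.I by push_cast; ring]
    rw [Complex.exp_add, Complex.exp_mul_I, ← Complex.ofReal_exp,
      ← Complex.ofReal_cos, ← Complex.ofReal_sin, Real.cos_neg, Real.sin_neg]
    push_cast
    norm_num
    ring
  have hsin0 : 0 ≤ Real.sin y := Real.sin_nonneg_of_nonneg_of_le_pi hy0 hyπ
  have hbr : ((c * (1 - u⁻¹)) * (starRingEnd ℂ) D).re = -((1+a)^2 * Real.sin y) := by
    rw [hD, huinv_eq, hc3, hc4, hc]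
    simp only [map_add, map_mul, map_sub, map_one, Complex.conj_ofReal, Complex.conj_I]
    have hsc : Real.sin y ^ 2 + Real.cos y ^ 2 = 1 := by
      rw [add_comm]; exact Real.cos_sq_add_sin_sq y
    rcases hε with h | h <;> rw [h] <;>
      simp only [Complex.add_re, Complex.add_im, Complex.mul_re, Complex.mul_im, Complex.sub_re,
        Complex.sub_im, Complex.I_re, Complex.I_im, Complex.ofReal_re, Complex.ofReal_im,
        Complex.one_re, Complex.one_im, Complex.neg_re, Complex.neg_im] <;>
      nlinarith [hsc]
  rw [hdval, hbr]
  have : (0:ℝ) ≤ (1+a)^2 * Real.sin y := by positivity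
  have h2 : a * -((1 + a) ^ 2 * Real.sin y) ≤ 0 := by nlinarith
  exact div_nonpos_of_nonpos_of_nonneg h2 hnpos.le

theorem stmt5 (a : ℝ) (ha : a ∈ Set.Ioo (0:ℝ) 1) :
    ∃ A₀ ∈ Set.Ioo (0:ℝ) 1,
      DifferentiableOn ℂ (Sa a) {z : ℂ | |z.re| < Real.pi * A₀} ∧
      DifferentiableOn ℂ (Ra a) {z : ℂ | |z.re| < Real.pi * A₀} ∧
      (∀ A ∈ Set.Ioo (0:ℝ) A₀, ∀ ε : ℝ, ε = -1 ∨ ε = 1 →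
        AntitoneOn (fun y : ℝ => (Sa a (((A * y : ℝ) : ℂ) + (ε : ℂ) * Complex.I * (y : ℂ))).re)
          (Set.Icc 0 Real.pi) ∧
        MonotoneOn (fun y : ℝ => (Sa a (((-(A * y) : ℝ) : ℂ) + (ε : ℂ) * Complex.I * (y : ℂ))).re)
          (Set.Icc 0 Real.pi)) ∧
      (∀ ε : ℝ, ε = -1 ∨ ε = 1 →
        AntitoneOn (fun y : ℝ => (Ra a ((ε : ℂ) * Complex.I * (y : ℂ))).re)
          (Set.Icc 0 Real.pi)) := by
  obtain ⟨ha0, ha1⟩ := ha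
  have hπ := Real.pi_pos
  set A₀ : ℝ := min (1/10) ((1 - a)/(2 * Real.pi)) with hA₀
  have hA₀pos : 0 < A₀ := lt_min (by norm_num) (div_pos (by linarith) (by positivity))
  have hA₀lt1 : A₀ < 1 := lt_of_le_of_lt (min_le_left _ _) (by norm_num)
  have hA₀10 : A₀ ≤ 1/10 := min_le_left _ _
  have hA₀π : Real.pi * A₀ ≤ (1 - a)/2 := by
    calc Real.pi * A₀ ≤ Real.pi * ((1 - a)/(2 * Real.pi)) :=
          mul_le_mul_of_nonneg_left (min_le_right _ _) hπ.le
      _ = (1 - a)/2 := by field_simp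
  refine ⟨A₀, ⟨hA₀pos, hA₀lt1⟩, ?_, ?_, ?_, ?_⟩
  · intro z hz
    have hle : |z.re| ≤ (1 - a)/2 := le_trans (le_of_lt hz) hA₀π
    exact (SaHasDeriv ha0 ha1 hle).differentiableAt.differentiableWithinAt
  · intro z hz
    have hle : |z.re| ≤ (1 - a)/2 := le_trans (le_of_lt hz) hA₀π
    exact (RaHasDeriv ha0 ha1 hle).differentiableAt.differentiableWithinAt
  · intro A hA ε hε
    have hA10 : A ≤ 1/10 := le_trans hA.2.le hA₀10
    have hAπ : Real.pi * A ≤ (1 - a)/2 :=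
      le_trans (mul_le_mul_of_nonneg_left hA.2.le hπ.le) hA₀π
    constructor
    · have hfe : (fun y : ℝ => (Sa a (((A * y : ℝ) : ℂ) + (ε : ℂ) * Complex.I * (y : ℂ))).re)
          = (fun t : ℝ => (Sa a ((((1:ℝ):ℂ) * (A:ℂ) + (ε:ℂ) * Complex.I) * (t:ℂ))).re) := by
        funext t
        congr 2
        push_cast
        ring
      rw [hfe]
      apply antitoneOn_of_deriv_nonpos (convex_Icc 0 Real.pi)
      · intro y hy
        obtain ⟨d, hd, _⟩ := keyS (σ := 1) ha0 ha1 hA.1 hA10 hAπ (Or.inr rfl) hε hy.1 hy.2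
        exact hd.continuousAt.continuousWithinAt
      · intro y hy
        rw [interior_Icc] at hy
        obtain ⟨d, hd, _⟩ := keyS (σ := 1) ha0 ha1 hA.1 hA10 hAπ (Or.inr rfl) hε hy.1.le hy.2.le
        exact hd.differentiableAt.differentiableWithinAt
      · intro y hy
        rw [interior_Icc] at hy
        obtain ⟨d, hd, hs⟩ := keyS (σ := 1) ha0 ha1 hA.1 hA10 hAπ (Or.inr rfl) hε hy.1.le hy.2.le
        rw [hd.deriv]
        linarith
    · have hfe : (fun y : ℝ => (Sa a (((-(A * y) : ℝ) : ℂ) + (ε : ℂ) * Complex.I * (y : ℂ))).re)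
          = (fun t : ℝ => (Sa a ((((-1:ℝ):ℂ) * (A:ℂ) + (ε:ℂ) * Complex.I) * (t:ℂ))).re) := by
        funext t
        congr 2
        push_cast
        ring
      rw [hfe]
      apply monotoneOn_of_deriv_nonneg (convex_Icc 0 Real.pi)
      · intro y hy
        obtain ⟨d, hd, _⟩ := keyS (σ := -1) ha0 ha1 hA.1 hA10 hAπ (Or.inl rfl) hε hy.1 hy.2
        exact hd.continuousAt.continuousWithinAt
      · intro y hy
        rw [interior_Icc] at hy
        obtain ⟨d, hd, _⟩ := keyS (σ := -1) ha0 ha1 hA.1 hA10 hAπ (Or.inl rfl) hε hy.1.le hy.2.le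
        exact hd.differentiableAt.differentiableWithinAt
      · intro y hy
        rw [interior_Icc] at hy
        obtain ⟨d, hd, hs⟩ := keyS (σ := -1) ha0 ha1 hA.1 hA10 hAπ (Or.inl rfl) hε hy.1.le hy.2.le
        rw [hd.deriv]
        linarith
  · intro ε hε
    apply antitoneOn_of_deriv_nonpos (convex_Icc 0 Real.pi)
    · intro y hy
      obtain ⟨d, hd, _⟩ := keyR ha0 ha1 hε hy.1 hy.2
      exact hd.continuousAt.continuousWithinAt
    · intro y hy
      rw [interior_Icc] at hy
      obtain ⟨d, hd, _⟩ := keyR ha0 ha1 hε hy.1.le hy.2.le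
      exact hd.differentiableAt.differentiableWithinAt
    · intro y hy
      rw [interior_Icc] at hy
      obtain ⟨d, hd, hs⟩ := keyR ha0 ha1 hε hy.1.le hy.2.le
      rw [hd.deriv]
      exact hs
end

section
/- There exist universal constants C₁, C₂ > 0 such that the following holds: for every a ∈ (0, e^{−2π}], every δ ∈ [0, π] and every y ∈ [−π, π], one has Re[S_a(δ + iy)] ≤ −a·δ·(C₁·y² − C₂·δ²) and Re[S_a(−δ + iy)] ≥ a·δ·(C₁·y² − C₂·δ²). -/
open Real

lemma sinh_le_mul_cosh {x : ℝ} (hx : 0 ≤ x) : Real.sinh x ≤ x * Real.cosh x := by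
  rw [Real.sinh_eq_tsum, Real.cosh_eq_tsum, ← tsum_mul_left]
  refine Summable.tsum_le_tsum (fun n => ?_) x.hasSum_sinh.summable
    ((x.hasSum_cosh.mul_left x).summable)
  rw [pow_succ, mul_comm (x ^ (2*n)) x, mul_div_assoc]
  have hle : ((2*n).factorial : ℝ) ≤ ((2*n+1).factorial : ℝ) := by
    exact_mod_cast Nat.factorial_le (by omega)
  have hfp : (0:ℝ) < ((2*n).factorial : ℝ) := by exact_mod_cast Nat.factorial_pos _
  exact mul_le_mul_of_nonneg_left
    (div_le_div_of_nonneg_left (pow_nonneg hx _) hfp hle) hx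

lemma exp_sub_exp_neg_le {x : ℝ} (hx : 0 ≤ x) :
    Real.exp x - Real.exp (-x) ≤ x * (Real.exp x + Real.exp (-x)) := by
  have h := sinh_le_mul_cosh hx
  rw [Real.sinh_eq, Real.cosh_eq] at h
  linarith

lemma exp_sub_exp_neg_ge {x : ℝ} (hx : 0 ≤ x) :
    2*x ≤ Real.exp x - Real.exp (-x) := by
  have h := Real.self_le_sinh_iff.2 hx
  rw [Real.sinh_eq] at h
  linarith

lemma exp_105_le : Real.exp 1.05 ≤ 2.862 := by
  have h1 : (0.95:ℝ) ≤ Real.exp (-(0.05 : ℝ)) := by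
    have := Real.add_one_le_exp (-(0.05:ℝ)); linarith
  have h3 := Real.exp_pos (0.05:ℝ)
  have h2 : Real.exp (0.05 : ℝ) ≤ 1/0.95 := by
    rw [Real.exp_neg] at h1
    have h5 := mul_le_mul_of_nonneg_left h1 h3.le
    rw [mul_inv_cancel₀ h3.ne'] at h5
    nlinarith
  have h4 : Real.exp 1 ≤ 2.7182818286 := (Real.exp_one_lt_d9).le
  have he : Real.exp (1.05:ℝ) = Real.exp 1 * Real.exp 0.05 := by
    rw [← Real.exp_add]; norm_num
  rw [he]
  nlinarith [Real.exp_pos (1:ℝ)]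

lemma exp_pi_le : Real.exp π ≤ 24 := by
  have hpi : π ≤ 3.15 := by linarith [Real.pi_lt_d2]
  have h2 : Real.exp (3.15:ℝ) = (Real.exp 1.05)^(3:ℕ) := by
    rw [← Real.exp_nat_mul]; norm_num
  have h3 := Real.exp_pos (1.05:ℝ)
  calc Real.exp π ≤ Real.exp 3.15 := Real.exp_le_exp.2 hpi
    _ = (Real.exp 1.05)^(3:ℕ) := h2
    _ ≤ 2.862^(3:ℕ) := pow_le_pow_left₀ h3.le exp_105_le 3
    _ ≤ 24 := by norm_num

lemma exp_pi_ge : (20:ℝ) ≤ Real.exp π := by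
  have hpi : (3:ℝ) ≤ π := by linarith [Real.pi_gt_d6]
  have h2 : Real.exp (3:ℝ) = (Real.exp 1)^(3:ℕ) := by
    rw [← Real.exp_nat_mul]; norm_num
  have h4 : (2.7182818283:ℝ) ≤ Real.exp 1 := (Real.exp_one_gt_d9).le
  calc (20:ℝ) ≤ 2.7182818283^(3:ℕ) := by norm_num
    _ ≤ (Real.exp 1)^(3:ℕ) := pow_le_pow_left₀ (by norm_num) h4 3
    _ = Real.exp 3 := h2.symm
    _ ≤ Real.exp π := Real.exp_le_exp.2 hpi

lemma normSq_aux (a r y : ℝ) :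
    Complex.normSq (1 + (a:ℂ) * Complex.exp ((r:ℂ) + Complex.I * (y:ℂ))) =
      1 + 2*a*Real.exp r*Real.cos y + a^2*(Real.exp r)^2 := by
  have hsc := Real.sin_sq_add_cos_sq y
  rw [Complex.normSq_apply]
  simp [Complex.exp_re, Complex.exp_im]
  linear_combination (a^2 * Real.exp r^2) * hsc

lemma Sa_re (a δ y : ℝ) :
    (Sa a ((δ:ℂ) + Complex.I * (y:ℂ))).re =
      Real.log (1 + 2*a*Real.exp δ*Real.cos y + a^2*(Real.exp δ)^2) / 2
      - Real.log (1 + 2*a*Real.exp (-δ)*Real.cos y + a^2*(Real.exp (-δ))^2) / 2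
      - 2*a*δ/(1+a) := by
  have hneg : -((δ:ℂ) + Complex.I * (y:ℂ)) = ((-δ : ℝ):ℂ) + Complex.I * ((-y:ℝ):ℂ) := by
    push_cast; ring
  have h1 := normSq_aux a δ y
  have h2 := normSq_aux a (-δ) (-y)
  rw [Real.cos_neg] at h2
  have hre : ∀ w : ℂ, (Complex.log w).re = Real.log (Complex.normSq w) / 2 := by
    intro w
    rw [Complex.log_re, Complex.norm_def, Real.log_sqrt (Complex.normSq_nonneg w)]
  have hd : ((2 * (a:ℂ) * ((δ:ℂ) + Complex.I * (y:ℂ)) / (1 + (a:ℂ)))).re = 2*a*δ/(1+a) := by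
    have h : (1 + (a:ℂ)) = ((1+a : ℝ) : ℂ) := by push_cast; ring
    rw [h, Complex.div_ofReal_re]
    congr 1
    simp [Complex.mul_re]
  unfold Sa
  rw [hneg]
  simp only [Complex.sub_re, hre, hd, h1, h2]

lemma log_quad_bound {u : ℝ} (h : |u| ≤ 1/2) : |Real.log (1+u) - u + u^2/2| ≤ 2*|u|^3 := by
  have h1 : |(-u)| < 1 := by rw [abs_neg]; linarith
  have h2 := Real.abs_log_sub_add_sum_range_le h1 2
  simp only [Finset.sum_range_succ, Finset.sum_range_zero] at h2
  norm_num at h2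
  have h5 : |u|^3/(1-|u|) ≤ 2*|u|^3 := by
    rw [div_le_iff₀ (by linarith)]
    nlinarith [pow_nonneg (abs_nonneg u) 3]
  rw [show Real.log (1+u) - u + u^2/2 = -u + u^2/2 + Real.log (1+u) from by ring]
  linarith


set_option maxHeartbeats 1000000 in
lemma main_est {a δ c p q : ℝ} (ha0 : 0 < a) (ha400 : a ≤ 1/400)
    (hδ0 : 0 ≤ δ) (hδ315 : δ ≤ 3.15)
    (hp0 : 0 < p) (hq0 : 0 < q) (hpq : p*q = 1) (hp1 : 1 ≤ p) (hq1 : q ≤ 1) (hp24 : p ≤ 24)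
    (hap : a*p ≤ 1/20) (hap2 : a*p^2 ≤ 1) (hcl : -1 ≤ c) (hcu : c ≤ 1)
    (hs : p - q ≤ δ*(p+q)) (hs2 : p^2-q^2 ≤ 2*δ*(p^2+q^2))
    (hsign : 2*δ ≤ p-q) (hsign2 : 4*δ ≤ p^2-q^2)
    (hhalf : p+q-2 ≤ δ^2*p) (hgeo : 0 ≤ p+q-2)
    (hp1δ : p-1 ≤ δ*p) (hq1δ : 1-q ≤ δ) (hp2δ : p^2-1 ≤ 2*δ*p^2) (hq2δ : 1-q^2 ≤ 2*δ) :
    Real.log (1+2*a*p*c+a^2*p^2)/2 - Real.log (1+2*a*q*c+a^2*q^2)/2 - 2*a*δ/(1+a)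
      ≤ -(19/10)*(a*δ*(1-c)) + 38*(a*δ^3) := by
  have ha1 : (0:ℝ) < 1 + a := by linarith
  have hd3 : (0:ℝ) ≤ a*δ^3 := by
    have := pow_nonneg hδ0 3; nlinarith only [ha0.le, this, mul_nonneg ha0.le this]
  have hm0 : (0:ℝ) ≤ a*δ*(1-c) := by
    have h1 : (0:ℝ) ≤ a*δ := mul_nonneg ha0.le hδ0
    nlinarith only [mul_nonneg h1 (by linarith : (0:ℝ) ≤ 1 - c)]
  have hadp : (0:ℝ) ≤ δ*(a*p) := mul_nonneg hδ0 (mul_nonneg ha0.le hp0.le)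
  set E := 1 + 2*a*c + a^2 with hE_def
  set N := 1 + 2*a*p*c + a^2*p^2 with hN_def
  set D := 1 + 2*a*q*c + a^2*q^2 with hD_def
  have hE_lo : (99/100:ℝ) ≤ E := by
    rw [hE_def]
    nlinarith only [mul_nonneg ha0.le (by linarith : (0:ℝ) ≤ c + 1), sq_nonneg a, ha400, ha0.le]
  have hE_hi : E ≤ 101/100 := by
    rw [hE_def]
    nlinarith only [mul_nonneg ha0.le (by linarith : (0:ℝ) ≤ 1 - c), ha400, ha0.le]
  have hE0 : (0:ℝ) < E := by linarith
  have hN0 : (0:ℝ) < N := by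
    rw [hN_def]
    nlinarith only [sq_nonneg (19/20 - a*p), hap,
      mul_nonneg (mul_nonneg ha0.le hp0.le) (by linarith : (0:ℝ) ≤ c + 1),
      mul_pos ha0 hp0]
  have haq : a*q ≤ 1/400 := by
    nlinarith only [ha400, hq1, ha0.le, mul_le_mul_of_nonneg_left hq1 ha0.le]
  have hD0 : (0:ℝ) < D := by
    rw [hD_def]
    nlinarith only [sq_nonneg (1 - a*q), haq,
      mul_nonneg (mul_nonneg ha0.le hq0.le) (by linarith : (0:ℝ) ≤ c + 1),
      mul_pos ha0 hq0]
  set u := (N - E)/E with hu_def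
  set v := (D - E)/E with hv_def
  clear_value u v N D E
  have h1u : 1 + u = N/E := by rw [hu_def]; field_simp; ring
  have h1v : 1 + v = D/E := by rw [hv_def]; field_simp; ring
  have hlogN : Real.log N = Real.log E + Real.log (1+u) := by
    rw [h1u, Real.log_div hN0.ne' hE0.ne']; ring
  have hlogD : Real.log D = Real.log E + Real.log (1+v) := by
    rw [h1v, Real.log_div hD0.ne' hE0.ne']; ring
  -- structural identities
  have hNE : N - E = 2*a*(c*(p-1)) + a^2*(p^2-1) := by rw [hN_def, hE_def]; ring
  have hDE : D - E = 2*a*(c*(q-1)) + a^2*(q^2-1) := by rw [hD_def, hE_def]; ring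
  have hND : N - D = 2*a*(c*(p-q)) + a^2*(p^2-q^2) := by rw [hN_def, hD_def]; ring
  have hNDE : N + D - 2*E = 2*a*(c*(p+q-2)) + a^2*(p^2+q^2-2) := by
    rw [hN_def, hD_def, hE_def]; ring
  -- bounds on u
  have hNEu : N - E ≤ (21/10)*(δ*(a*p)) := by
    have k1 : 2*a*(c*(p-1)) ≤ 2*a*(p-1) := by
      nlinarith only [mul_le_mul_of_nonneg_left hcu
        (mul_nonneg (mul_nonneg (by norm_num : (0:ℝ) ≤ 2) ha0.le) (by linarith : (0:ℝ) ≤ p-1))]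
    have k2 : 2*a*(p-1) ≤ 2*a*(δ*p) :=
      mul_le_mul_of_nonneg_left hp1δ (by linarith : (0:ℝ) ≤ 2*a)
    have k3 : a^2*(p^2-1) ≤ a^2*(2*δ*p^2) :=
      mul_le_mul_of_nonneg_left hp2δ (sq_nonneg a)
    have k4 : 2*(δ*(a*p))*(a*p) ≤ 2*(δ*(a*p))*(1/20) :=
      mul_le_mul_of_nonneg_left hap (by nlinarith only [hadp])
    nlinarith only [hNE, k1, k2, k3, k4, hadp]
  have hNEl : -((21/10)*(δ*(a*p))) ≤ N - E := by
    have k1 : -(2*a*(p-1)) ≤ 2*a*(c*(p-1)) := by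
      nlinarith only [mul_le_mul_of_nonneg_left hcl
        (mul_nonneg (mul_nonneg (by norm_num : (0:ℝ) ≤ 2) ha0.le) (by linarith : (0:ℝ) ≤ p-1))]
    have k2 : 2*a*(p-1) ≤ 2*a*(δ*p) :=
      mul_le_mul_of_nonneg_left hp1δ (by linarith : (0:ℝ) ≤ 2*a)
    have k3 : (0:ℝ) ≤ a^2*(p^2-1) := by
      nlinarith only [sq_nonneg a, hp1, mul_nonneg (sq_nonneg a) (by nlinarith only [hp1] : (0:ℝ) ≤ p^2-1)]
    nlinarith only [hNE, k1, k2, k3, hadp]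
  have hu_abs : |u| ≤ 3*(δ*(a*p)) := by
    rw [hu_def, abs_div, abs_of_pos hE0, div_le_iff₀ hE0]
    have k5 : |N - E| ≤ (21/10)*(δ*(a*p)) := abs_le.2 ⟨by linarith, hNEu⟩
    have k6 : 3*(δ*(a*p))*(99/100) ≤ 3*(δ*(a*p))*E :=
      mul_le_mul_of_nonneg_left hE_lo (by nlinarith only [hadp])
    linarith only [k5, k6, hadp]
  have hu_half : |u| ≤ 1/2 := by
    have k1 : δ*(a*p) ≤ 3.15*(1/20) :=
      mul_le_mul hδ315 hap (mul_nonneg ha0.le hp0.le) (by norm_num)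
    linarith only [hu_abs, k1]
  -- bounds on v
  have hDEu : D - E ≤ (21/10)*(δ*a) := by
    have k1 : 2*a*(c*(q-1)) ≤ 2*a*(1-q) := by
      nlinarith only [mul_le_mul_of_nonneg_left hcl
        (mul_nonneg (mul_nonneg (by norm_num : (0:ℝ) ≤ 2) ha0.le) (by linarith : (0:ℝ) ≤ 1-q))]
    have k2 : 2*a*(1-q) ≤ 2*a*δ :=
      mul_le_mul_of_nonneg_left hq1δ (by linarith : (0:ℝ) ≤ 2*a)
    have k3 : a^2*(q^2-1) ≤ 0 := by
      nlinarith only [mul_nonneg (sq_nonneg a) (by nlinarith only [hq1, hq0.le] : (0:ℝ) ≤ 1-q^2)]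
    nlinarith only [hDE, k1, k2, k3, mul_nonneg hδ0 ha0.le]
  have hDEl : -((21/10)*(δ*a)) ≤ D - E := by
    have k1 : -(2*a*(1-q)) ≤ 2*a*(c*(q-1)) := by
      nlinarith only [mul_le_mul_of_nonneg_left hcu
        (mul_nonneg (mul_nonneg (by norm_num : (0:ℝ) ≤ 2) ha0.le) (by linarith : (0:ℝ) ≤ 1-q))]
    have k2 : 2*a*(1-q) ≤ 2*a*δ :=
      mul_le_mul_of_nonneg_left hq1δ (by linarith : (0:ℝ) ≤ 2*a)
    have k3 : -(a^2*(1-q^2)) ≤ a^2*(q^2-1) := by nlinarith only []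
    have k4 : a^2*(1-q^2) ≤ a^2*(2*δ) := mul_le_mul_of_nonneg_left hq2δ (sq_nonneg a)
    have k5 : a^2*(2*δ) ≤ (1/400)*a*(2*δ) := by
      nlinarith only [mul_le_mul_of_nonneg_right ha400 (mul_nonneg ha0.le (by linarith : (0:ℝ) ≤ 2*δ))]
    nlinarith only [hDE, k1, k2, k3, k4, k5, mul_nonneg ha0.le hδ0]
  have hv_abs : |v| ≤ 3*(δ*a) := by
    rw [hv_def, abs_div, abs_of_pos hE0, div_le_iff₀ hE0]
    have k5 : |D - E| ≤ (21/10)*(δ*a) := abs_le.2 ⟨by linarith, hDEu⟩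
    have k6 : 3*(δ*a)*(99/100) ≤ 3*(δ*a)*E :=
      mul_le_mul_of_nonneg_left hE_lo (by nlinarith only [mul_nonneg hδ0 ha0.le])
    linarith only [k5, k6, mul_nonneg hδ0 ha0.le]
  have hv_half : |v| ≤ 1/2 := by
    have k1 : δ*a ≤ 3.15*(1/400) :=
      mul_le_mul hδ315 ha400 ha0.le (by norm_num)
    linarith only [hv_abs, k1]
  -- log remainder bounds
  have hLu : |Real.log (1+u) - u + u^2/2| ≤ 2*|u|^3 := log_quad_bound hu_half
  have hLv : |Real.log (1+v) - v + v^2/2| ≤ 2*|v|^3 := log_quad_bound hv_half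
  have hLu' : |Real.log (1+u) - u + u^2/2| ≤ 3*(a*δ^3) := by
    refine le_trans hLu ?_
    have h3 : |u|^3 ≤ (3*(δ*(a*p)))^3 := pow_le_pow_left₀ (abs_nonneg u) hu_abs 3
    have h6 : (a*p^2)*(a*p) ≤ 1*(1/20) :=
      mul_le_mul hap2 hap (mul_nonneg ha0.le hp0.le) (by norm_num)
    have h7 : 54*(δ^3*a)*((a*p^2)*(a*p)) ≤ 54*(δ^3*a)*(1*(1/20)) :=
      mul_le_mul_of_nonneg_left h6 (by nlinarith only [mul_nonneg (pow_nonneg hδ0 3) ha0.le])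
    nlinarith only [h3, h7, hd3]
  have hLv' : |Real.log (1+v) - v + v^2/2| ≤ a*δ^3 := by
    refine le_trans hLv ?_
    have h3 : |v|^3 ≤ (3*(δ*a))^3 := pow_le_pow_left₀ (abs_nonneg v) hv_abs 3
    have ha2 : a*a ≤ (1/400)*(1/400) := mul_le_mul ha400 ha400 ha0.le (by norm_num)
    have h7 : 54*(δ^3*a)*(a*a) ≤ 54*(δ^3*a)*((1/400)*(1/400)) :=
      mul_le_mul_of_nonneg_left ha2 (by nlinarith only [mul_nonneg (pow_nonneg hδ0 3) ha0.le])
    nlinarith only [h3, h7, hd3]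
  -- step S1
  have hX0 : (0:ℝ) ≤ p - q - 2*δ := by linarith only [hsign]
  have hY0 : (0:ℝ) ≤ p^2 - q^2 - 4*δ := by linarith only [hsign2]
  have hA : p - q - 2*δ ≤ δ^3*p := by
    nlinarith only [hs, hhalf, hδ0, mul_le_mul_of_nonneg_left hhalf hδ0]
  have hps : (p+q)^2 ≤ 4*p^2 := by nlinarith only [hq1, hp1, hq0.le, sq_nonneg (p-q)]
  have hsq : p^2+q^2-2 ≤ 4*(δ^2*p^2) := by
    have k1 : (p-q)*(p-q) ≤ (δ*(p+q))*(δ*(p+q)) :=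
      mul_self_le_mul_self (by linarith only [hsign, hδ0] : (0:ℝ) ≤ p-q) hs
    have k2 : δ^2*(p+q)^2 ≤ δ^2*(4*p^2) := mul_le_mul_of_nonneg_left hps (sq_nonneg δ)
    nlinarith only [hpq, k1, k2]
  have hB : p^2 - q^2 - 4*δ ≤ 8*(δ^3*p^2) := by
    have k1 : 2*δ*(p^2+q^2-2) ≤ 2*δ*(4*(δ^2*p^2)) :=
      mul_le_mul_of_nonneg_left hsq (by linarith : (0:ℝ) ≤ 2*δ)
    nlinarith only [hs2, k1]
  have hid : (u-v)/2 - 2*a*δ/(1+a) =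
      ((1+a)*(2*a*(c*(p-q-2*δ)) + a^2*(p^2-q^2-4*δ)) - 4*a*δ*(1-c)*(1-a)) / (2*E*(1+a)) := by
    have hEe : (1 + 2*a*c + a^2) ≠ 0 := by rw [← hE_def]; exact hE0.ne'
    have hae : (1 + a) ≠ 0 := ha1.ne'
    rw [hu_def, hv_def, hN_def, hD_def, hE_def]
    field_simp
    ring
  have ht0 : c*(p-q-2*δ) ≤ p-q-2*δ := by
    nlinarith only [mul_le_mul_of_nonneg_right hcu hX0]
  have ht1 : a*(p-q-2*δ) ≤ 24*(a*δ^3) := by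
    have k1 : a*(p-q-2*δ) ≤ a*(δ^3*p) := mul_le_mul_of_nonneg_left hA ha0.le
    have k2 : a*δ^3*p ≤ a*δ^3*24 :=
      mul_le_mul_of_nonneg_left hp24 (by nlinarith only [hd3])
    nlinarith only [k1, k2]
  have ht2 : a^2*(p^2-q^2-4*δ) ≤ 8*(a*δ^3) := by
    have k1 : a^2*(p^2-q^2-4*δ) ≤ a^2*(8*(δ^3*p^2)) := mul_le_mul_of_nonneg_left hB (sq_nonneg a)
    have k2 : 8*(δ^3*a)*(a*p^2) ≤ 8*(δ^3*a)*1 :=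
      mul_le_mul_of_nonneg_left hap2 (by nlinarith only [mul_nonneg (pow_nonneg hδ0 3) ha0.le])
    nlinarith only [k1, k2]
  have hnum_le : (1+a)*(2*a*(c*(p-q-2*δ)) + a^2*(p^2-q^2-4*δ)) - 4*a*δ*(1-c)*(1-a)
      ≤ 57*(a*δ^3) - (39/10)*(a*δ*(1-c)) := by
    have hXc : 2*a*(c*(p-q-2*δ)) ≤ 48*(a*δ^3) := by
      nlinarith only [mul_le_mul_of_nonneg_left ht0 ha0.le, ht1]
    have hsum : 2*a*(c*(p-q-2*δ)) + a^2*(p^2-q^2-4*δ) ≤ 56*(a*δ^3) := by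
      linarith only [hXc, ht2]
    have hppos : (1+a)*(2*a*(c*(p-q-2*δ)) + a^2*(p^2-q^2-4*δ)) ≤ (1+a)*(56*(a*δ^3)) :=
      mul_le_mul_of_nonneg_left hsum (by linarith : (0:ℝ) ≤ 1+a)
    have hshr : (1+a)*(56*(a*δ^3)) ≤ 57*(a*δ^3) := by
      nlinarith only [mul_le_mul_of_nonneg_right ha400 hd3, hd3]
    have hneg : (39/10)*(a*δ*(1-c)) ≤ (4*(1-a))*(a*δ*(1-c)) := by
      nlinarith only [mul_le_mul_of_nonneg_right (show (39/10:ℝ) ≤ 4*(1-a) by linarith) hm0]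
    nlinarith only [hppos, hshr, hneg, hm0]
  have hden_lo : (198/100 : ℝ) ≤ 2*E*(1+a) := by
    nlinarith only [mul_le_mul_of_nonneg_left (show (1:ℝ) ≤ 1+a by linarith) hE0.le, hE_lo,
      mul_le_mul_of_nonneg_right hE_lo (show (0:ℝ) ≤ 1+a by linarith), ha0.le]
  have hden_hi : 2*E*(1+a) ≤ 203/100 := by
    nlinarith only [mul_le_mul hE_hi (show 1+a ≤ 1+1/400 by linarith) (by linarith) (by norm_num)]
  have hden0 : (0:ℝ) < 2*E*(1+a) := by linarith
  have S1 : (u-v)/2 - 2*a*δ/(1+a) ≤ 29*(a*δ^3) - (19/10)*(a*δ*(1-c)) := by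
    rw [hid, div_le_iff₀ hden0]
    have k1 : (198/100)*(a*δ^3) ≤ (2*E*(1+a))*(a*δ^3) :=
      mul_le_mul_of_nonneg_right hden_lo hd3
    have k2 : (2*E*(1+a))*(a*δ*(1-c)) ≤ (203/100)*(a*δ*(1-c)) :=
      mul_le_mul_of_nonneg_right hden_hi hm0
    nlinarith only [hnum_le, k1, k2, hd3, hm0]
  -- step S2
  have hNDu : N - D ≤ (21/5)*(a*δ*p) := by
    have k0 : (0:ℝ) ≤ p - q := by linarith only [hsign, hδ0]
    have k1 : 2*a*(c*(p-q)) ≤ 2*a*(p-q) := by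
      nlinarith only [mul_le_mul_of_nonneg_left hcu
        (mul_nonneg (mul_nonneg (by norm_num : (0:ℝ) ≤ 2) ha0.le) k0)]
    have k2 : 2*a*(p-q) ≤ 2*a*(δ*(p+q)) :=
      mul_le_mul_of_nonneg_left hs (by linarith : (0:ℝ) ≤ 2*a)
    have k25 : 2*a*(δ*(p+q)) ≤ 2*a*(δ*(2*p)) := by
      nlinarith only [mul_le_mul_of_nonneg_left (show p+q ≤ 2*p by linarith only [hq1, hp1])
        (mul_nonneg (mul_nonneg (by norm_num : (0:ℝ) ≤ 2) ha0.le) hδ0)]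
    have k3 : a^2*(p^2-q^2) ≤ a^2*(2*δ*(p^2+q^2)) := mul_le_mul_of_nonneg_left hs2 (sq_nonneg a)
    have k35 : a^2*(2*δ*(p^2+q^2)) ≤ a^2*(2*δ*(2*p^2)) := by
      nlinarith only [mul_le_mul_of_nonneg_left (show p^2+q^2 ≤ 2*p^2 by nlinarith only [hq1, hq0.le, hp1])
        (mul_nonneg (sq_nonneg a) (by linarith : (0:ℝ) ≤ 2*δ))]
    have k4 : 4*(a*δ*p)*(a*p) ≤ 4*(a*δ*p)*(1/20) :=
      mul_le_mul_of_nonneg_left hap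
        (by nlinarith only [mul_nonneg (mul_nonneg ha0.le hδ0) hp0.le])
    nlinarith only [hND, k1, k2, k25, k3, k35, k4, mul_nonneg (mul_nonneg ha0.le hδ0) hp0.le]
  have hNDl : -((21/5)*(a*δ*p)) ≤ N - D := by
    have k0 : (0:ℝ) ≤ p - q := by linarith only [hsign, hδ0]
    have k1 : -(2*a*(p-q)) ≤ 2*a*(c*(p-q)) := by
      nlinarith only [mul_le_mul_of_nonneg_left hcl
        (mul_nonneg (mul_nonneg (by norm_num : (0:ℝ) ≤ 2) ha0.le) k0)]
    have k2 : 2*a*(p-q) ≤ 2*a*(δ*(p+q)) :=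
      mul_le_mul_of_nonneg_left hs (by linarith : (0:ℝ) ≤ 2*a)
    have k25 : 2*a*(δ*(p+q)) ≤ 2*a*(δ*(2*p)) := by
      nlinarith only [mul_le_mul_of_nonneg_left (show p+q ≤ 2*p by linarith only [hq1, hp1])
        (mul_nonneg (mul_nonneg (by norm_num : (0:ℝ) ≤ 2) ha0.le) hδ0)]
    have k3 : (0:ℝ) ≤ a^2*(p^2-q^2) := by
      nlinarith only [mul_nonneg (sq_nonneg a) (by nlinarith only [k0, hp0.le, hq0.le] : (0:ℝ) ≤ p^2 - q^2)]
    nlinarith only [hND, k1, k2, k25, k3, mul_nonneg (mul_nonneg ha0.le hδ0) hp0.le]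
  have huv1 : |u - v| ≤ 5*(a*δ*p) := by
    have hidd : u - v = (N-D)/E := by rw [hu_def, hv_def]; ring
    rw [hidd, abs_div, abs_of_pos hE0, div_le_iff₀ hE0]
    have k5 : |N - D| ≤ (21/5)*(a*δ*p) := abs_le.2 ⟨by linarith, hNDu⟩
    have k6 : 5*(a*δ*p)*(99/100) ≤ 5*(a*δ*p)*E :=
      mul_le_mul_of_nonneg_left hE_lo
        (by nlinarith only [mul_nonneg (mul_nonneg ha0.le hδ0) hp0.le])
    linarith only [k5, k6, mul_nonneg (mul_nonneg ha0.le hδ0) hp0.le]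
  have hSDu : N + D - 2*E ≤ (23/10)*(a*δ^2*p) := by
    have k1 : 2*a*(c*(p+q-2)) ≤ 2*a*(p+q-2) := by
      nlinarith only [mul_le_mul_of_nonneg_left hcu
        (mul_nonneg (mul_nonneg (by norm_num : (0:ℝ) ≤ 2) ha0.le) hgeo)]
    have k2 : 2*a*(p+q-2) ≤ 2*a*(δ^2*p) :=
      mul_le_mul_of_nonneg_left hhalf (by linarith : (0:ℝ) ≤ 2*a)
    have k3 : a^2*(p^2+q^2-2) ≤ a^2*(4*(δ^2*p^2)) := mul_le_mul_of_nonneg_left hsq (sq_nonneg a)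
    have k4 : 4*(a*δ^2*p)*(a*p) ≤ 4*(a*δ^2*p)*(1/20) :=
      mul_le_mul_of_nonneg_left hap
        (by nlinarith only [mul_nonneg (mul_nonneg ha0.le (sq_nonneg δ)) hp0.le])
    nlinarith only [hNDE, k1, k2, k3, k4]
  have hSDl : -((23/10)*(a*δ^2*p)) ≤ N + D - 2*E := by
    have k1 : -(2*a*(p+q-2)) ≤ 2*a*(c*(p+q-2)) := by
      nlinarith only [mul_le_mul_of_nonneg_left hcl
        (mul_nonneg (mul_nonneg (by norm_num : (0:ℝ) ≤ 2) ha0.le) hgeo)]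
    have k2 : 2*a*(p+q-2) ≤ 2*a*(δ^2*p) :=
      mul_le_mul_of_nonneg_left hhalf (by linarith : (0:ℝ) ≤ 2*a)
    have k3 : (0:ℝ) ≤ a^2*(p^2+q^2-2) := by
      nlinarith only [mul_nonneg (sq_nonneg a) (by nlinarith only [hpq, sq_nonneg (p-q)] : (0:ℝ) ≤ p^2+q^2-2)]
    nlinarith only [hNDE, k1, k2, k3, mul_nonneg (mul_nonneg ha0.le (sq_nonneg δ)) hp0.le]
  have huv2 : |u + v| ≤ 3*(a*δ^2*p) := by
    have hidd : u + v = (N+D-2*E)/E := by rw [hu_def, hv_def]; ring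
    rw [hidd, abs_div, abs_of_pos hE0, div_le_iff₀ hE0]
    have k5 : |N+D-2*E| ≤ (23/10)*(a*δ^2*p) := abs_le.2 ⟨by linarith, hSDu⟩
    have k6 : 3*(a*δ^2*p)*(99/100) ≤ 3*(a*δ^2*p)*E :=
      mul_le_mul_of_nonneg_left hE_lo
        (by nlinarith only [mul_nonneg (mul_nonneg ha0.le (sq_nonneg δ)) hp0.le])
    linarith only [k5, k6, mul_nonneg (mul_nonneg ha0.le (sq_nonneg δ)) hp0.le]
  have S2 : -(u^2 - v^2)/4 ≤ 4*(a*δ^3) := by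
    have h2 : |u^2 - v^2| = |u - v| * |u + v| := by rw [show u^2-v^2 = (u-v)*(u+v) from by ring, abs_mul]
    have h3 : |u - v| * |u + v| ≤ (5*(a*δ*p))*(3*(a*δ^2*p)) :=
      mul_le_mul huv1 huv2 (abs_nonneg _)
        (by nlinarith only [mul_nonneg (mul_nonneg ha0.le hδ0) hp0.le])
    have h4 : 15*(a*δ^3)*(a*p^2) ≤ 15*(a*δ^3)*1 :=
      mul_le_mul_of_nonneg_left hap2 (by nlinarith only [hd3])
    have h5 : |u^2-v^2| ≤ 15*(a*δ^3) := by
      rw [h2]; nlinarith only [h3, h4]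
    have := abs_le.1 h5
    linarith only [this.1, hd3]
  -- assembly
  rw [hlogN, hlogD]
  have b1 := abs_le.1 hLu'
  have b2 := abs_le.1 hLv'
  linarith only [S1, S2, b1.1, b1.2, b2.1, b2.2, hd3]

lemma Sa_neg (a : ℝ) (z : ℂ) : Sa a (-z) = -(Sa a z) := by
  simp only [Sa, neg_neg]
  ring

set_option maxHeartbeats 1000000 in
lemma key (a δ y : ℝ) (ha0 : 0 < a) (ha : a ≤ Real.exp (-(2*π)))
    (hδ0 : 0 ≤ δ) (hδπ : δ ≤ π) (hy : |y| ≤ π) :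
    (Sa a ((δ:ℂ) + Complex.I * (y:ℂ))).re ≤ -(a * δ * (1/3 * y^2 - 100*δ^2)) := by
  rw [Sa_re]
  have hπ3 : (3:ℝ) ≤ π := by linarith [Real.pi_gt_d6]
  have hπ315 : π ≤ 3.15 := by linarith [Real.pi_lt_d2]
  have hδ315 : δ ≤ 3.15 := le_trans hδπ hπ315
  have hp0 : (0:ℝ) < Real.exp δ := Real.exp_pos δ
  have hq0 : (0:ℝ) < Real.exp (-δ) := Real.exp_pos _
  have hpq : Real.exp δ * Real.exp (-δ) = 1 := by rw [← Real.exp_add]; simp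
  have hp1 : 1 ≤ Real.exp δ := Real.one_le_exp hδ0
  have hq1 : Real.exp (-δ) ≤ 1 := by
    nlinarith only [hpq, mul_nonneg hq0.le (sub_nonneg.2 hp1)]
  have hp24 : Real.exp δ ≤ 24 := le_trans (Real.exp_le_exp.2 hδπ) exp_pi_le
  have hepi : (20:ℝ) ≤ Real.exp π := exp_pi_ge
  have hepi0 : (0:ℝ) < Real.exp π := Real.exp_pos π
  have he2pi0 : (0:ℝ) < Real.exp (-(2*π)) := Real.exp_pos _
  have hexp2pi : Real.exp (-(2*π)) * (Real.exp π)^2 = 1 := by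
    have h2 : (Real.exp π)^2 = Real.exp (π + π) := by rw [Real.exp_add]; ring
    rw [h2, ← Real.exp_add, show -(2*π) + (π + π) = 0 from by ring, Real.exp_zero]
  have ha400 : a ≤ 1/400 := by
    have h1 : a * (Real.exp π)^2 ≤ 1 := by
      nlinarith only [mul_le_mul_of_nonneg_right ha (by positivity : (0:ℝ) ≤ (Real.exp π)^2),
        hexp2pi]
    have h2 : (400:ℝ) ≤ (Real.exp π)^2 := by nlinarith only [hepi, hepi0]
    nlinarith only [h1, h2, mul_nonneg ha0.le (sub_nonneg.2 h2)]
  have hpe : Real.exp δ ≤ Real.exp π := Real.exp_le_exp.2 hδπ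
  have hap : a * Real.exp δ ≤ 1/20 := by
    have h1 : a * Real.exp δ ≤ Real.exp (-(2*π)) * Real.exp π :=
      mul_le_mul ha hpe hp0.le he2pi0.le
    have h2 : Real.exp (-(2*π)) * Real.exp π ≤ 1/20 := by
      nlinarith only [hexp2pi, hepi,
        mul_nonneg (mul_nonneg he2pi0.le hepi0.le) (sub_nonneg.2 hepi)]
    linarith only [h1, h2]
  have hap2 : a * (Real.exp δ)^2 ≤ 1 := by
    have h1 : a * (Real.exp δ)^2 ≤ Real.exp (-(2*π)) * (Real.exp π)^2 :=
      mul_le_mul ha (pow_le_pow_left₀ hp0.le hpe 2) (by positivity) he2pi0.le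
    linarith only [h1, hexp2pi]
  have hc1 : |Real.cos y| ≤ 1 := Real.abs_cos_le_one y
  obtain ⟨hcl, hcu⟩ := abs_le.1 hc1
  have hm : y^2 ≤ 5*(1 - Real.cos y) := by
    have h1 := Real.cos_le_one_sub_mul_cos_sq hy
    have h2 : (0:ℝ) < π^2 := by positivity
    have h4 : 1/5 ≤ 2/π^2 := by
      rw [div_le_div_iff₀ (by norm_num) h2]
      nlinarith only [hπ315, hπ3]
    have h5 := mul_le_mul_of_nonneg_right h4 (sq_nonneg y)
    nlinarith only [h1, h5]
  have hs : Real.exp δ - Real.exp (-δ) ≤ δ*(Real.exp δ + Real.exp (-δ)) :=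
    exp_sub_exp_neg_le hδ0
  have h2d : Real.exp (2*δ) = (Real.exp δ)^2 := by rw [two_mul, Real.exp_add]; ring
  have h2dn : Real.exp (-(2*δ)) = (Real.exp (-δ))^2 := by
    rw [show -(2*δ) = -δ + -δ from by ring, Real.exp_add]; ring
  have hs2 : (Real.exp δ)^2 - (Real.exp (-δ))^2 ≤ 2*δ*((Real.exp δ)^2 + (Real.exp (-δ))^2) := by
    have h := exp_sub_exp_neg_le (by linarith : (0:ℝ) ≤ 2*δ)
    rw [h2d, h2dn] at h; linarith only [h]
  have hsign : 2*δ ≤ Real.exp δ - Real.exp (-δ) := exp_sub_exp_neg_ge hδ0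
  have hsign2 : 4*δ ≤ (Real.exp δ)^2 - (Real.exp (-δ))^2 := by
    have h := exp_sub_exp_neg_ge (by linarith : (0:ℝ) ≤ 2*δ)
    rw [h2d, h2dn] at h; linarith only [h]
  have hgeo : (0:ℝ) ≤ Real.exp δ + Real.exp (-δ) - 2 := by
    nlinarith only [hpq, mul_nonneg (sub_nonneg.2 hp1) (sub_nonneg.2 hq1)]
  have hhalf : Real.exp δ + Real.exp (-δ) - 2 ≤ δ^2 * Real.exp δ := by
    have hr2 : (Real.exp (δ/2))^2 = Real.exp δ := by rw [sq, ← Real.exp_add]; norm_num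
    have hrq2 : (Real.exp (-(δ/2)))^2 = Real.exp (-δ) := by
      rw [sq, ← Real.exp_add]; congr 1; ring
    have hrrq : Real.exp (δ/2) * Real.exp (-(δ/2)) = 1 := by rw [← Real.exp_add]; simp
    have hr1 : 1 ≤ Real.exp (δ/2) := Real.one_le_exp (by linarith)
    have hrq0 : (0:ℝ) < Real.exp (-(δ/2)) := Real.exp_pos _
    have hrq1 : Real.exp (-(δ/2)) ≤ 1 := by
      nlinarith only [hrrq, mul_nonneg hrq0.le (sub_nonneg.2 hr1)]
    have hsr : Real.exp (δ/2) - Real.exp (-(δ/2)) ≤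
        (δ/2)*(Real.exp (δ/2) + Real.exp (-(δ/2))) := exp_sub_exp_neg_le (by linarith)
    have hms := mul_self_le_mul_self
      (show (0:ℝ) ≤ Real.exp (δ/2) - Real.exp (-(δ/2)) from by linarith) hsr
    have hfudge : (0:ℝ) ≤ δ^2 * (3*Real.exp δ - Real.exp (-δ) - 2) :=
      mul_nonneg (sq_nonneg δ) (by linarith only [hp1, hq1])
    nlinarith only [hr2, hrq2, hrrq, hms, hfudge]
  have hp1δ : Real.exp δ - 1 ≤ δ*Real.exp δ := by
    have h1 : 1 - δ ≤ Real.exp (-δ) := by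
      have := Real.add_one_le_exp (-δ); linarith
    nlinarith only [mul_le_mul_of_nonneg_left h1 hp0.le, hpq]
  have hq1δ : 1 - Real.exp (-δ) ≤ δ := by
    have := Real.add_one_le_exp (-δ); linarith
  have h12δ : 1 - 2*δ ≤ (Real.exp (-δ))^2 := by
    have := Real.add_one_le_exp (-(2*δ)); rw [h2dn] at this; linarith
  have hpq2 : (Real.exp δ)^2 * (Real.exp (-δ))^2 = 1 := by
    rw [← mul_pow, hpq]; norm_num
  have hp2δ : (Real.exp δ)^2 - 1 ≤ 2*δ*(Real.exp δ)^2 := by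
    nlinarith only [mul_le_mul_of_nonneg_left h12δ (by positivity : (0:ℝ) ≤ (Real.exp δ)^2), hpq2]
  have hq2δ : 1 - (Real.exp (-δ))^2 ≤ 2*δ := by linarith only [h12δ]
  have hmain := main_est ha0 ha400 hδ0 hδ315 hp0 hq0 hpq hp1 hq1 hp24 hap hap2 hcl hcu
    hs hs2 hsign hsign2 hhalf hgeo hp1δ hq1δ hp2δ hq2δ
  have hd3 : (0:ℝ) ≤ a*δ^3 := mul_nonneg ha0.le (pow_nonneg hδ0 3)
  have hm0 : (0:ℝ) ≤ a*δ*(1 - Real.cos y) :=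
    mul_nonneg (mul_nonneg ha0.le hδ0) (by linarith only [hcu])
  have hy5 : (1/3)*(a*δ*y^2) ≤ (19/10)*(a*δ*(1 - Real.cos y)) := by
    have k := mul_le_mul_of_nonneg_left hm (mul_nonneg ha0.le hδ0)
    linarith only [k, hm0]
  linarith only [hmain, hy5, hd3]

theorem stmt8 :
    ∃ C₁ > 0, ∃ C₂ > 0, ∀ a : ℝ, a ∈ Set.Ioc 0 (Real.exp (-(2 * Real.pi))) →
      ∀ δ ∈ Set.Icc (0:ℝ) Real.pi, ∀ y ∈ Set.Icc (-Real.pi) Real.pi,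
        (Sa a ((δ : ℂ) + Complex.I * (y : ℂ))).re ≤ -(a * δ * (C₁ * y ^ 2 - C₂ * δ ^ 2)) ∧
        a * δ * (C₁ * y ^ 2 - C₂ * δ ^ 2) ≤ (Sa a (((-δ : ℝ) : ℂ) + Complex.I * (y : ℂ))).re := by
  refine ⟨1/3, by norm_num, 100, by norm_num, ?_⟩
  rintro a ⟨ha0, ha⟩ δ ⟨hδ0, hδπ⟩ y ⟨hy1, hy2⟩
  have hyabs : |y| ≤ π := abs_le.2 ⟨hy1, hy2⟩
  have hynabs : |(-y)| ≤ π := by rw [abs_neg]; exact hyabs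
  constructor
  · exact key a δ y ha0 ha hδ0 hδπ hyabs
  · have h1 := key a δ (-y) ha0 ha hδ0 hδπ hynabs
    have h2 : (((-δ:ℝ):ℂ) + Complex.I * (y:ℂ)) = -((δ:ℂ) + Complex.I * (((-y):ℝ):ℂ)) := by
      push_cast; ring
    rw [h2, Sa_neg, Complex.neg_re]
    have h3 : (-y:ℝ)^2 = y^2 := by ring
    rw [h3] at h1
    linarith
end

section
/- There exists a universal constant C₃ > 0 such that for every a ∈ (0, e^{−2π}] and every z = x + iy ∈ ℂ with x, y ∈ [−π, π], one has −C₃·a·|z|² ≤ Re[R_a(z)] ≤ C₃·a·|z|². -/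
open Complex in
lemma Ra_key (a : ℝ) (ha0 : 0 < a) (ha1 : a ≤ Real.exp (-(2 * Real.pi))) (z : ℂ)
    (hzre : |z.re| ≤ Real.pi) :
    ‖Ra a z‖ ≤ 4 * Real.exp Real.pi * a * ‖z‖ ^ 2 := by
  set u : ℂ → ℂ := fun w => (a : ℂ) * Complex.exp (-w) with hu_def
  set h : ℂ → ℂ := fun w => (a : ℂ) / (1 + (a : ℂ)) - u w / (1 + u w) with hh_def
  have hpi1 : (1:ℝ) ≤ Real.pi := by linarith [Real.pi_gt_three]
  -- basic norm bounds on segment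
  have hmem : ∀ w ∈ segment ℝ (0:ℂ) z, |w.re| ≤ Real.pi ∧ ‖w‖ ≤ ‖z‖ := by
    intro w hw
    rw [segment_eq_image] at hw
    obtain ⟨t, ht, rfl⟩ := hw
    simp only [smul_zero, zero_add]
    constructor
    · have h1 : (t • z).re = t * z.re := by simp
      rw [h1, abs_mul, _root_.abs_of_nonneg ht.1]
      calc t * |z.re| ≤ 1 * |z.re| := by
            exact mul_le_mul_of_nonneg_right ht.2 (abs_nonneg _)
        _ ≤ Real.pi := by simpa using hzre
    · rw [norm_smul, Real.norm_eq_abs, _root_.abs_of_nonneg ht.1]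
      calc t * ‖z‖ ≤ 1 * ‖z‖ := mul_le_mul_of_nonneg_right ht.2 (norm_nonneg _)
        _ = ‖z‖ := one_mul _
  have hub : ∀ w : ℂ, |w.re| ≤ Real.pi →
      ‖u w‖ ≤ a * Real.exp Real.pi ∧ ‖u w‖ ≤ 1/2 := by
    intro w hw
    have h1 : ‖u w‖ = a * Real.exp (-w.re) := by
      simp only [hu_def]
      rw [norm_mul, Complex.norm_real, Real.norm_eq_abs,
        Complex.norm_exp, abs_of_pos ha0, Complex.neg_re]
    have h2 : Real.exp (-w.re) ≤ Real.exp Real.pi := by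
      apply Real.exp_le_exp.2
      have := abs_le.1 hw
      linarith [this.1]
    constructor
    · rw [h1]; exact mul_le_mul_of_nonneg_left h2 ha0.le
    · rw [h1]
      have : a * Real.exp (-w.re) ≤ Real.exp (-(2*Real.pi)) * Real.exp Real.pi :=
        mul_le_mul ha1 h2 (Real.exp_pos _).le (Real.exp_pos _).le
      rw [← Real.exp_add] at this
      have h3 : Real.exp (-(2*Real.pi) + Real.pi) ≤ Real.exp (-1) := by
        apply Real.exp_le_exp.2; linarith
      have h4 : Real.exp (-1) ≤ 1/2 := by
        rw [Real.exp_neg]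
        rw [inv_le_comm₀ (Real.exp_pos _) (by norm_num)]
        calc (1/2 : ℝ)⁻¹ = 2 := by norm_num
          _ ≤ Real.exp 1 := by linarith [Real.add_one_le_exp (1:ℝ)]
      linarith
  have hden : ∀ w : ℂ, |w.re| ≤ Real.pi →
      (1/2 : ℝ) ≤ ‖1 + u w‖ ∧ (1 + u w) ∈ Complex.slitPlane := by
    intro w hw
    have := (hub w hw).2
    have hn : (1:ℝ) ≤ ‖1 + u w‖ + ‖u w‖ := by
      calc (1:ℝ) = ‖(1 + u w) - u w‖ := by rw [add_sub_cancel_right, norm_one]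
        _ ≤ ‖1 + u w‖ + ‖u w‖ := norm_sub_le _ _
    constructor
    · linarith
    · rw [Complex.mem_slitPlane_iff]
      left
      have hre : |(u w).re| ≤ ‖u w‖ := Complex.abs_re_le_norm _
      have : (1 + u w).re = 1 + (u w).re := by simp
      rw [this]
      have := abs_le.1 hre
      linarith
  have hne : ∀ w : ℂ, |w.re| ≤ Real.pi → (1 + u w) ≠ 0 := by
    intro w hw
    intro hc
    have := (hden w hw).1
    rw [hc] at this; simp at this; linarith
  -- derivatives
  have hu' : ∀ w : ℂ, HasDerivAt u (-(u w)) w := by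
    intro w
    have h1 : HasDerivAt (fun x : ℂ => Complex.exp (-x)) (Complex.exp (-w) * (-1)) w :=
      (hasDerivAt_neg w).cexp
    have := h1.const_mul (a : ℂ)
    refine this.congr_deriv ?_
    simp only [hu_def]
    ring
  have hg' : ∀ w : ℂ, |w.re| ≤ Real.pi → HasDerivAt (Ra a) (h w) w := by
    intro w hw
    have h1 : HasDerivAt (fun x : ℂ => 1 + u x) (-(u w)) w := (hu' w).const_add 1
    have h2 : HasDerivAt (fun x : ℂ => Complex.log (1 + u x)) (-(u w) / (1 + u w)) w :=
      h1.clog (hden w hw).2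
    have h3 : HasDerivAt (fun x : ℂ => (a : ℂ) * x / (1 + (a : ℂ)))
        ((a : ℂ) * 1 / (1 + (a : ℂ))) w := ((hasDerivAt_id w).const_mul (a : ℂ)).div_const _
    have := (h2.sub_const (Complex.log (1 + (a : ℂ)))).add h3
    refine this.congr_deriv ?_
    simp only [hh_def]
    ring
  have hh' : ∀ w : ℂ, |w.re| ≤ Real.pi → HasDerivAt h (u w / (1 + u w) ^ 2) w := by
    intro w hw
    have h1 : HasDerivAt (fun x : ℂ => 1 + u x) (-(u w)) w := (hu' w).const_add 1
    have h2 : HasDerivAt (fun x : ℂ => u x / (1 + u x))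
        (((-(u w)) * (1 + u w) - u w * (-(u w))) / (1 + u w) ^ 2) w :=
      (hu' w).div h1 (hne w hw)
    have := h2.const_sub ((a : ℂ) / (1 + (a : ℂ)))
    refine this.congr_deriv ?_
    field_simp
    ring
  -- step A: bound h on segment
  set M : ℝ := 4 * Real.exp Real.pi * a with hM
  have hstepA : ∀ w ∈ segment ℝ (0:ℂ) z, ‖h w‖ ≤ M * ‖z‖ := by
    have hbound : ∀ w ∈ segment ℝ (0:ℂ) z, ‖u w / (1 + u w) ^ 2‖ ≤ M := by
      intro w hw
      obtain ⟨hwre, -⟩ := hmem w hw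
      rw [norm_div, norm_pow]
      have h1 := (hub w hwre).1
      have h2 := (hden w hwre).1
      have h3 : (1/2 : ℝ)^2 ≤ ‖1 + u w‖^2 := by
        apply pow_le_pow_left₀ (by norm_num) h2
      rw [div_le_iff₀ (by nlinarith)]
      calc ‖u w‖ ≤ a * Real.exp Real.pi := h1
        _ = M * (1/2:ℝ)^2 := by rw [hM]; ring
        _ ≤ M * ‖1 + u w‖^2 := by
            apply mul_le_mul_of_nonneg_left h3
            rw [hM]; positivity
    intro w hw
    have key := (convex_segment (0:ℂ) z).norm_image_sub_le_of_norm_hasDerivWithin_le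
      (f := h) (f' := fun w => u w / (1 + u w) ^ 2) (C := M)
      (fun x hx => ((hh' x (hmem x hx).1).hasDerivWithinAt))
      hbound (left_mem_segment ℝ 0 z) hw
    have h0 : h 0 = 0 := by simp [hh_def, hu_def]
    rw [h0, sub_zero, sub_zero] at key
    calc ‖h w‖ ≤ M * ‖w‖ := key
      _ ≤ M * ‖z‖ := by
          apply mul_le_mul_of_nonneg_left (hmem w hw).2
          rw [hM]; positivity
  -- step B
  have key := (convex_segment (0:ℂ) z).norm_image_sub_le_of_norm_hasDerivWithin_le
    (f := Ra a) (f' := h) (C := M * ‖z‖)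
    (fun x hx => ((hg' x (hmem x hx).1).hasDerivWithinAt))
    hstepA (left_mem_segment ℝ 0 z) (right_mem_segment ℝ 0 z)
  have h0 : Ra a 0 = 0 := by simp [Ra]
  rw [h0, sub_zero, sub_zero] at key
  calc ‖Ra a z‖ ≤ M * ‖z‖ * ‖z‖ := key
    _ = 4 * Real.exp Real.pi * a * ‖z‖ ^ 2 := by rw [hM]; ring

theorem stmt9 :
    ∃ C₃ > 0, ∀ a : ℝ, a ∈ Set.Ioc 0 (Real.exp (-(2 * Real.pi))) →
      ∀ x ∈ Set.Icc (-Real.pi) Real.pi, ∀ y ∈ Set.Icc (-Real.pi) Real.pi,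
        -(C₃ * a * ‖(x : ℂ) + Complex.I * (y : ℂ)‖ ^ 2) ≤
            (Ra a ((x : ℂ) + Complex.I * (y : ℂ))).re ∧
        (Ra a ((x : ℂ) + Complex.I * (y : ℂ))).re ≤
            C₃ * a * ‖(x : ℂ) + Complex.I * (y : ℂ)‖ ^ 2 := by
  refine ⟨4 * Real.exp Real.pi, by positivity, ?_⟩
  rintro a ⟨ha0, ha1⟩ x hx y hy
  set z : ℂ := (x : ℂ) + Complex.I * (y : ℂ) with hz
  have hzre : |z.re| ≤ Real.pi := by
    have : z.re = x := by simp [hz]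
    rw [this, abs_le]; exact ⟨hx.1, hx.2⟩
  have hkey := Ra_key a ha0 ha1 z hzre
  have hre : |(Ra a z).re| ≤ ‖Ra a z‖ := Complex.abs_re_le_norm _
  constructor
  · have := abs_le.1 (le_trans hre hkey)
    linarith [this.1]
  · have := abs_le.1 (le_trans hre hkey)
    linarith [this.2]
end
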